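/- arXiv:2104.11126 — 5 statements merged into one kernel-verified Lean document; each statement's English description precedes it below -/
import Mathlib

section
/- Let κ>0 and ν∈(−1,1/2], and let (p̂_rad,p̂_tan) and (p̃_rad,p̃_tan) be two elastic constitutive functions for spherically symmetric bodies with bulk modulus κ and Poisson ratio ν. Then the two constitutive functions are dynamically equivalent if and only if there exists a C² function q:(0,∞)→ℝ with q(1)=0 and q'(1)=0 such that, for all δ,η>0, p̂_rad(δ,η)=p̃_rad(δ,η)+q(η) and p̂_tan(δ,η)=p̃_tan(δ,η)+q(η)−(3/2)(η−δ)q'(η). -/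
open Real Set Filter Topology

noncomputable section

/-- An elastic constitutive function for spherically symmetric bodies with
bulk modulus `κ` and Poisson ratio `ν`: a `C²` map `(p̂_rad, p̂_tan)` on `(0,∞)²`
satisfying the isotropy condition at `δ = η`, the normalization at the reference
configuration `(1,1)`, and compatibility with linear elasticity. -/
def IsElasticConst (κ ν : ℝ) (prad ptan : ℝ → ℝ → ℝ) : Prop :=
  ContDiffOn ℝ 2 (fun p : ℝ × ℝ => prad p.1 p.2) (Ioi 0 ×ˢ Ioi 0) ∧
  ContDiffOn ℝ 2 (fun p : ℝ × ℝ => ptan p.1 p.2) (Ioi 0 ×ˢ Ioi 0) ∧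
  (∀ δ : ℝ, 0 < δ → prad δ δ = ptan δ δ) ∧
  (∀ δ : ℝ, 0 < δ → deriv (fun η => prad δ η + 2 * ptan δ η) δ = 0) ∧
  prad 1 1 = 0 ∧ ptan 1 1 = 0 ∧
  deriv (fun d => prad d 1) 1 = 3 * κ * (1 - ν) / (1 + ν) ∧
  deriv (fun η => prad 1 η) 1 = -(2 * κ * (1 - 2 * ν) / (1 + ν)) ∧
  deriv (fun d => ptan d 1) 1 = 3 * κ * ν / (1 + ν) ∧
  deriv (fun η => ptan 1 η) 1 = κ * (1 - 2 * ν) / (1 + ν)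

/-- `â(δ,η) = ∂_δ p̂_rad(δ,η)`. -/
def ahat (prad : ℝ → ℝ → ℝ) (δ η : ℝ) : ℝ := deriv (fun d => prad d η) δ

/-- `b̂(δ,η) = 2(p̂_tan − p̂_rad)/(η − δ) + 3 ∂_η p̂_rad(δ,η)` (for `η ≠ δ`). -/
def bhat (prad ptan : ℝ → ℝ → ℝ) (δ η : ℝ) : ℝ :=
  2 * (ptan δ η - prad δ η) / (η - δ) + 3 * deriv (fun e => prad δ e) η

/-- Two constitutive functions are dynamically equivalent if their `â` coincide on
`(0,∞)²` and their `b̂` coincide off the diagonal. -/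
def DynEquiv (prad1 ptan1 prad2 ptan2 : ℝ → ℝ → ℝ) : Prop :=
  (∀ δ η : ℝ, 0 < δ → 0 < η → ahat prad1 δ η = ahat prad2 δ η) ∧
  (∀ δ η : ℝ, 0 < δ → 0 < η → η ≠ δ →
    bhat prad1 ptan1 δ η = bhat prad2 ptan2 δ η)

private lemma sliceD1 {F : ℝ → ℝ → ℝ}
    (hF : ContDiffOn ℝ 2 (fun p : ℝ × ℝ => F p.1 p.2) (Ioi 0 ×ˢ Ioi 0))
    {δ η : ℝ} (hδ : 0 < δ) (hη : 0 < η) :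
    DifferentiableAt ℝ (fun d => F d η) δ := by
  have hop : IsOpen ((Ioi (0:ℝ)) ×ˢ (Ioi (0:ℝ))) := isOpen_Ioi.prod isOpen_Ioi
  have h2 : DifferentiableAt ℝ (fun p : ℝ × ℝ => F p.1 p.2) (δ, η) :=
    (hF.contDiffAt (hop.mem_nhds ⟨mem_Ioi.mpr hδ, mem_Ioi.mpr hη⟩)).differentiableAt two_ne_zero
  exact h2.comp δ (differentiableAt_id.prodMk (differentiableAt_const _) : DifferentiableAt ℝ (fun d : ℝ => (d, η)) δ)

private lemma sliceD2 {F : ℝ → ℝ → ℝ}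
    (hF : ContDiffOn ℝ 2 (fun p : ℝ × ℝ => F p.1 p.2) (Ioi 0 ×ˢ Ioi 0))
    {δ η : ℝ} (hδ : 0 < δ) (hη : 0 < η) :
    DifferentiableAt ℝ (fun e => F δ e) η := by
  have hop : IsOpen ((Ioi (0:ℝ)) ×ˢ (Ioi (0:ℝ))) := isOpen_Ioi.prod isOpen_Ioi
  have h2 : DifferentiableAt ℝ (fun p : ℝ × ℝ => F p.1 p.2) (δ, η) :=
    (hF.contDiffAt (hop.mem_nhds ⟨mem_Ioi.mpr hδ, mem_Ioi.mpr hη⟩)).differentiableAt two_ne_zero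
  exact h2.comp η ((differentiableAt_const _).prodMk differentiableAt_id)

private lemma const_of_deriv_zero {f : ℝ → ℝ}
    (hf : ∀ x ∈ Ioi (0:ℝ), DifferentiableAt ℝ f x)
    (hf' : ∀ x ∈ Ioi (0:ℝ), deriv f x = 0)
    {x y : ℝ} (hx : 0 < x) (hy : 0 < y) : f x = f y := by
  refine (convex_Ioi 0).is_const_of_fderivWithin_eq_zero
    (fun z hz => (hf z hz).differentiableWithinAt) (fun z hz => ?_) hx hy
  rw [fderivWithin_of_isOpen isOpen_Ioi hz]
  have h := (hf z hz).hasDerivAt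
  rw [hf' z hz] at h
  have h0 : HasFDerivAt f (0 : ℝ →L[ℝ] ℝ) z := by
    have := hasDerivAt_iff_hasFDerivAt.mp h
    rw [show (ContinuousLinearMap.toSpanSingleton ℝ (0:ℝ)) = 0 by ext; simp] at this
    exact this
  exact h0.fderiv

/-- Two elastic constitutive functions are dynamically equivalent iff they differ by a
`C²` function `q` of `η` with `q(1) = q'(1) = 0`, as in the displayed formulas. -/
theorem dynEquiv_iff_exists_q (κ ν : ℝ) (hκ : 0 < κ) (hν : ν ∈ Ioc (-1 : ℝ) (1/2))
    (prad1 ptan1 prad2 ptan2 : ℝ → ℝ → ℝ)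
    (h1 : IsElasticConst κ ν prad1 ptan1) (h2 : IsElasticConst κ ν prad2 ptan2) :
    DynEquiv prad1 ptan1 prad2 ptan2 ↔
      ∃ q : ℝ → ℝ, ContDiffOn ℝ 2 q (Ioi 0) ∧ q 1 = 0 ∧ deriv q 1 = 0 ∧
        ∀ δ η : ℝ, 0 < δ → 0 < η →
          prad1 δ η = prad2 δ η + q η ∧
          ptan1 δ η = ptan2 δ η + q η - (3/2) * (η - δ) * deriv q η := by

  obtain ⟨hr1, ht1, hiso1, -, hrad1_11, htan1_11, -, hdη1, -, -⟩ := h1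
  obtain ⟨hr2, ht2, hiso2, -, hrad2_11, htan2_11, -, hdη2, -, -⟩ := h2
  constructor
  · rintro ⟨ha, hb⟩
    refine ⟨fun η => prad1 1 η - prad2 1 η, ?_, ?_, ?_, ?_⟩
    · have hmap : MapsTo (fun η : ℝ => ((1:ℝ), η)) (Ioi 0) (Ioi 0 ×ˢ Ioi 0) :=
        fun η hη => ⟨mem_Ioi.mpr one_pos, hη⟩
      have hg : ContDiffOn ℝ 2 (fun η : ℝ => ((1:ℝ), η)) (Ioi 0) :=
        (contDiff_const.prodMk contDiff_id).contDiffOn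
      exact (hr1.comp hg hmap).sub (hr2.comp hg hmap)
    · simp [hrad1_11, hrad2_11]
    · rw [deriv_fun_sub (sliceD2 hr1 one_pos one_pos) (sliceD2 hr2 one_pos one_pos), hdη1, hdη2]
      ring
    · -- first the prad relation
      have hkey : ∀ δ η : ℝ, 0 < δ → 0 < η →
          prad1 δ η = prad2 δ η + (prad1 1 η - prad2 1 η) := by
        intro δ η hδ hη
        have hc : (fun d => prad1 d η - prad2 d η) δ = (fun d => prad1 d η - prad2 d η) 1 := by
          refine const_of_deriv_zero (fun z hz => (sliceD1 hr1 hz hη).sub (sliceD1 hr2 hz hη))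
            (fun z hz => ?_) hδ one_pos
          rw [deriv_sub (sliceD1 hr1 hz hη) (sliceD1 hr2 hz hη)]
          have := ha z η hz hη
          simp only [ahat] at this
          rw [this]; ring
        simp only at hc
        linarith
      -- derivative of q
      have hqd : ∀ η : ℝ, 0 < η →
          DifferentiableAt ℝ (fun e => prad1 1 e - prad2 1 e) η :=
        fun η hη => (sliceD2 hr1 one_pos hη).sub (sliceD2 hr2 one_pos hη)
      have hderiv_rel : ∀ δ η : ℝ, 0 < δ → 0 < η →
          deriv (fun e => prad1 δ e) η
            = deriv (fun e => prad2 δ e) η + deriv (fun e => prad1 1 e - prad2 1 e) η := by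
        intro δ η hδ hη
        have heq : (fun e => prad1 δ e) =ᶠ[nhds η]
            (fun e => prad2 δ e + (prad1 1 e - prad2 1 e)) := by
          filter_upwards [isOpen_Ioi.mem_nhds (mem_Ioi.mpr hη)] with e he
          exact hkey δ e hδ he
        rw [heq.deriv_eq, deriv_fun_add (sliceD2 hr2 hδ hη) (hqd η hη)]
      intro δ η hδ hη
      refine ⟨hkey δ η hδ hη, ?_⟩
      by_cases hne : η = δ
      · subst hne
        have h1 := hiso1 η hη
        have h2 := hiso2 η hη
        have := hkey η η hη hη
        rw [h1, h2] at this
        rw [this]; ring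
      · have hbb := hb δ η hδ hη hne
        simp only [bhat] at hbb
        rw [hderiv_rel δ η hδ hη] at hbb
        have hsub : η - δ ≠ 0 := sub_ne_zero.mpr hne
        have h1 := hkey δ η hδ hη
        field_simp at hbb
        nlinarith [hbb, h1, sq_nonneg (η - δ)]
  · rintro ⟨q, hqC, hq1, hq'1, hpq⟩
    have hqdiff : ∀ η : ℝ, 0 < η → DifferentiableAt ℝ q η := fun η hη =>
      ((hqC.differentiableOn two_ne_zero).differentiableAt
        (isOpen_Ioi.mem_nhds (mem_Ioi.mpr hη)))
    constructor
    · intro δ η hδ hη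
      have heq : (fun d => prad1 d η) =ᶠ[nhds δ] (fun d => prad2 d η + q η) := by
        filter_upwards [isOpen_Ioi.mem_nhds (mem_Ioi.mpr hδ)] with d hd
        exact (hpq d η hd hη).1
      simp only [ahat]
      rw [heq.deriv_eq, deriv_add_const]
    · intro δ η hδ hη hne
      have hsub : η - δ ≠ 0 := sub_ne_zero.mpr hne
      have heq : (fun e => prad1 δ e) =ᶠ[nhds η] (fun e => prad2 δ e + q e) := by
        filter_upwards [isOpen_Ioi.mem_nhds (mem_Ioi.mpr hη)] with e he
        exact (hpq δ e hδ he).1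
      have hdrel : deriv (fun e => prad1 δ e) η
          = deriv (fun e => prad2 δ e) η + deriv q η := by
        rw [heq.deriv_eq, deriv_fun_add (sliceD2 hr2 hδ hη) (hqdiff η hη)]
      obtain ⟨hpr, hpt⟩ := hpq δ η hδ hη
      simp only [bhat]
      rw [hdrel, hpr, hpt]
      field_simp
      ring
end
end

section
/- Let (p̂_rad,p̂_tan) be a hyperelastic constitutive function for spherically symmetric bodies (with bulk modulus κ>0 and Poisson ratio ν∈(−1,1/2]) such that b̂(δ,η)=0 for all δ,η>0 with η≠δ. Then ∂_δp̂_rad(δ,η) is independent of η, i.e., ∂_δp̂_rad(δ,η₁)=∂_δp̂_rad(δ,η₂) for all δ,η₁,η₂>0; consequently (p̂_rad,p̂_tan) is dynamically equivalent to a fluid constitutive function. -/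
open Real Set Filter Topology

noncomputable section

/-- `w` is a stored energy function for `(p̂_rad, p̂_tan)`. -/
def IsStoredEnergy (w prad ptan : ℝ → ℝ → ℝ) : Prop :=
  ContDiffOn ℝ 3 (fun p : ℝ × ℝ => w p.1 p.2) (Ioi 0 ×ˢ Ioi 0) ∧
  w 1 1 = 0 ∧
  (∀ δ η : ℝ, 0 < δ → 0 < η → prad δ η = δ ^ 2 * deriv (fun d => w d η) δ) ∧
  (∀ δ η : ℝ, 0 < δ → 0 < η →
    ptan δ η = prad δ η + (3 / 2) * δ * η * deriv (fun e => w δ e) η)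

lemma mySlice1 (F : ℝ × ℝ → ℝ) (x : ℝ × ℝ) (hf : DifferentiableAt ℝ F x) :
    HasDerivAt (fun d => F (d, x.2)) (fderiv ℝ F x (1, 0)) x.1 := by
  have h := hf.hasFDerivAt.comp_hasDerivAt x.1
    ((hasDerivAt_id x.1).prodMk (hasDerivAt_const x.1 x.2))
  exact h

lemma mySlice2 (F : ℝ × ℝ → ℝ) (x : ℝ × ℝ) (hf : DifferentiableAt ℝ F x) :
    HasDerivAt (fun e => F (x.1, e)) (fderiv ℝ F x (0, 1)) x.2 := by
  have h := hf.hasFDerivAt.comp_hasDerivAt x.2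
    ((hasDerivAt_const x.2 x.1).prodMk (hasDerivAt_id x.2))
  exact h

lemma myClm (F : ℝ × ℝ → ℝ) (x v u : ℝ × ℝ) (hF : DifferentiableAt ℝ (fderiv ℝ F) x) :
    fderiv ℝ (fun y => fderiv ℝ F y v) x u = fderiv ℝ (fderiv ℝ F) x u v := by
  rw [fderiv_clm_apply hF (differentiableAt_const v)]
  simp

lemma myDense {f : ℝ × ℝ → ℝ} (hf : ContinuousOn f (Ioi 0 ×ˢ Ioi 0))
    (h : ∀ x ∈ (Ioi 0 ×ˢ Ioi 0 : Set (ℝ × ℝ)), x.2 ≠ x.1 → f x = 0) :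
    ∀ x ∈ (Ioi 0 ×ˢ Ioi 0 : Set (ℝ × ℝ)), f x = 0 := by
  intro x hx
  by_cases hd : x.2 = x.1
  · have hpos : ∀ n : ℕ, (0:ℝ) < 1 / (n + 1) := by intro n; positivity
    have huS : ∀ n : ℕ, ((x.1, x.2 + 1 / (n + 1)) : ℝ × ℝ) ∈ (Ioi 0 ×ˢ Ioi 0 : Set (ℝ × ℝ)) := by
      intro n
      refine ⟨hx.1, ?_⟩
      have h2 := hx.2
      simp only [mem_Ioi] at h2 ⊢
      have := hpos n
      linarith
    have h2 : Tendsto (fun n : ℕ => x.2 + 1 / ((n:ℝ) + 1)) atTop (𝓝 (x.2 + 0)) :=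
      tendsto_const_nhds.add tendsto_one_div_add_atTop_nhds_zero_nat
    rw [add_zero] at h2
    have htu : Tendsto (fun n : ℕ => ((x.1, x.2 + 1 / (n + 1)) : ℝ × ℝ)) atTop (𝓝 x) := by
      have := Tendsto.prodMk_nhds (tendsto_const_nhds : Tendsto (fun _ : ℕ => x.1) atTop (𝓝 x.1)) h2
      simpa using this
    have htu' : Tendsto (fun n : ℕ => ((x.1, x.2 + 1 / (n + 1)) : ℝ × ℝ)) atTop
        (𝓝[(Ioi 0 ×ˢ Ioi 0 : Set (ℝ × ℝ))] x) :=
      tendsto_nhdsWithin_iff.2 ⟨htu, Eventually.of_forall huS⟩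
    have hlim : Tendsto (fun n : ℕ => f (x.1, x.2 + 1 / (n + 1))) atTop (𝓝 (f x)) :=
      (hf x hx).tendsto.comp htu'
    have hzero : (fun n : ℕ => f (x.1, x.2 + 1 / (n + 1))) = fun _ => (0:ℝ) := by
      funext n
      refine h _ (huS n) ?_
      have hp := hpos n
      intro hcontra
      simp only at hcontra
      linarith [hd, hcontra]
    rw [hzero] at hlim
    exact tendsto_nhds_unique hlim tendsto_const_nhds
  · exact h x hx hd

lemma key (prad ptan w : ℝ → ℝ → ℝ)
    (hP : ContDiffOn ℝ 2 (fun p : ℝ × ℝ => prad p.1 p.2) (Ioi 0 ×ˢ Ioi 0))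
    (hw : ContDiffOn ℝ 3 (fun p : ℝ × ℝ => w p.1 p.2) (Ioi 0 ×ˢ Ioi 0))
    (hrad : ∀ δ η : ℝ, 0 < δ → 0 < η → prad δ η = δ ^ 2 * deriv (fun d => w d η) δ)
    (htan : ∀ δ η : ℝ, 0 < δ → 0 < η →
      ptan δ η = prad δ η + (3 / 2) * δ * η * deriv (fun e => w δ e) η)
    (hb : ∀ δ η : ℝ, 0 < δ → 0 < η → η ≠ δ → bhat prad ptan δ η = 0) :
    ∀ δ η₁ η₂ : ℝ, 0 < δ → 0 < η₁ → 0 < η₂ → ahat prad δ η₁ = ahat prad δ η₂ := by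
  set S : Set (ℝ × ℝ) := Ioi 0 ×ˢ Ioi 0 with hSdef
  have hSo : IsOpen S := isOpen_Ioi.prod isOpen_Ioi
  set P : ℝ × ℝ → ℝ := fun p => prad p.1 p.2 with hPdef
  set W : ℝ × ℝ → ℝ := fun p => w p.1 p.2 with hWdef
  -- pointwise smoothness
  have hPat : ∀ x ∈ S, ContDiffAt ℝ 2 P x := fun x hx => hP.contDiffAt (hSo.mem_nhds hx)
  have hWat : ∀ x ∈ S, ContDiffAt ℝ 3 W x := fun x hx => hw.contDiffAt (hSo.mem_nhds hx)
  have hPd : ∀ x ∈ S, DifferentiableAt ℝ P x := fun x hx =>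
    (hPat x hx).differentiableAt two_ne_zero
  have hWd : ∀ x ∈ S, DifferentiableAt ℝ W x := fun x hx =>
    (hWat x hx).differentiableAt (by norm_num)
  -- derivative functions are smooth
  have hP1 : ContDiffOn ℝ 1 (fderiv ℝ P) S := hP.fderiv_of_isOpen hSo (by norm_num)
  have hW2 : ContDiffOn ℝ 2 (fderiv ℝ W) S := hw.fderiv_of_isOpen hSo (by norm_num)
  have hP1d : ∀ x ∈ S, DifferentiableAt ℝ (fderiv ℝ P) x := fun x hx =>
    ((hP1.contDiffAt (hSo.mem_nhds hx)).differentiableAt one_ne_zero)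
  have hW2d : ∀ x ∈ S, DifferentiableAt ℝ (fderiv ℝ W) x := fun x hx =>
    ((hW2.contDiffAt (hSo.mem_nhds hx)).differentiableAt two_ne_zero)
  -- partial derivative functions
  set P₁W : ℝ × ℝ → ℝ := fun x => fderiv ℝ W x (1, 0) with hP₁Wdef
  set P₂W : ℝ × ℝ → ℝ := fun x => fderiv ℝ W x (0, 1) with hP₂Wdef
  set G : ℝ × ℝ → ℝ := fun x => fderiv ℝ P x (0, 1) with hGdef
  have hP₁Wd : ∀ x ∈ S, DifferentiableAt ℝ P₁W x := fun x hx =>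
    (hW2d x hx).clm_apply (differentiableAt_const _)
  have hP₂Wd : ∀ x ∈ S, DifferentiableAt ℝ P₂W x := fun x hx =>
    (hW2d x hx).clm_apply (differentiableAt_const _)
  have hGd : ∀ x ∈ S, DifferentiableAt ℝ G x := fun x hx =>
    (hP1d x hx).clm_apply (differentiableAt_const _)
  -- slice derivatives of w
  have hw1 : ∀ x ∈ S, deriv (fun d => w d x.2) x.1 = P₁W x := by
    intro x hx
    exact (mySlice1 W x (hWd x hx)).deriv
  have hw2 : ∀ x ∈ S, deriv (fun e => w x.1 e) x.2 = P₂W x := by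
    intro x hx
    exact (mySlice2 W x (hWd x hx)).deriv
  -- prad in terms of w
  have hPeq : ∀ x ∈ S, P x = x.1 ^ 2 * P₁W x := by
    intro x hx
    have := hrad x.1 x.2 hx.1 hx.2
    rw [hw1 x hx] at this
    exact this
  -- G is the η-derivative of prad
  have hG : ∀ x ∈ S, deriv (fun e => prad x.1 e) x.2 = G x := by
    intro x hx
    exact (mySlice2 P x (hPd x hx)).deriv
  -- G = δ² ∂₂P₁W
  have hGval : ∀ x ∈ S, G x = x.1 ^ 2 * fderiv ℝ P₁W x (0, 1) := by
    intro x hx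
    have hd2 : HasDerivAt (fun e => x.1 ^ 2 * P₁W (x.1, e))
        (x.1 ^ 2 * fderiv ℝ P₁W x (0, 1)) x.2 :=
      (mySlice2 P₁W x (hP₁Wd x hx)).const_mul (x.1 ^ 2)
    have hev : (fun e => prad x.1 e) =ᶠ[𝓝 x.2] fun e => x.1 ^ 2 * P₁W (x.1, e) := by
      have hmem : {e : ℝ | 0 < e} ∈ 𝓝 x.2 := isOpen_Ioi.mem_nhds hx.2
      filter_upwards [hmem] with e he
      have hxe : ((x.1, e) : ℝ × ℝ) ∈ S := ⟨hx.1, he⟩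
      have := hPeq (x.1, e) hxe
      simpa using this
    have := hd2.congr_of_eventuallyEq hev
    rw [← hG x hx]
    exact this.deriv
  -- symmetry of the second derivative of W : ∂₁P₂W = ∂₂P₁W
  have hsymW : ∀ x ∈ S, fderiv ℝ P₂W x (1, 0) = fderiv ℝ P₁W x (0, 1) := by
    intro x hx
    rw [hP₂Wdef, hP₁Wdef, myClm W x _ _ (hW2d x hx), myClm W x _ _ (hW2d x hx)]
    exact ((hWat x hx).isSymmSndFDerivAt (by norm_num)) _ _
  -- continuity facts
  have hP₂Wc : ContinuousOn P₂W S :=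
    (hW2.continuousOn).clm_apply continuousOn_const
  have hGc : ContinuousOn G S :=
    (hP1.continuousOn).clm_apply continuousOn_const
  -- the fundamental identity: δ η ∂₂w + (η - δ) ∂₂prad = 0 on S
  have hF₀ : ∀ x ∈ S, x.1 * x.2 * P₂W x + (x.2 - x.1) * G x = 0 := by
    apply myDense
    · exact ((continuousOn_fst.mul continuousOn_snd).mul hP₂Wc).add
        ((continuousOn_snd.sub continuousOn_fst).mul hGc)
    · intro x hx hne
      have hbb := hb x.1 x.2 hx.1 hx.2 hne
      rw [bhat] at hbb
      rw [hG x hx] at hbb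
      have hq : ptan x.1 x.2 - prad x.1 x.2 = 3 / 2 * x.1 * x.2 * P₂W x := by
        have := htan x.1 x.2 hx.1 hx.2
        rw [hw2 x hx] at this
        linarith
      rw [hq] at hbb
      have hsub : x.2 - x.1 ≠ 0 := sub_ne_zero.2 hne
      field_simp at hbb
      linarith
  -- DG = ∂₁∂₂ prad vanishes on S
  have hGC1 : ContDiffOn ℝ 1 G S := hP1.clm_apply contDiffOn_const
  have hDG0 : ∀ x ∈ S, fderiv ℝ G x (1, 0) = 0 := by
    apply myDense
    · exact ((ContDiffOn.fderiv_of_isOpen (m := 0) hGC1 hSo (by norm_num)).continuousOn).clm_apply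
        continuousOn_const
    · intro x hx hne
      -- differentiate the fundamental identity in the δ-direction
      have h1 : HasDerivAt (fun d : ℝ => d * x.2) x.2 x.1 := by
        simpa using (hasDerivAt_id x.1).mul_const x.2
      have h2 : HasDerivAt (fun d => P₂W (d, x.2)) (fderiv ℝ P₂W x (1, 0)) x.1 :=
        mySlice1 P₂W x (hP₂Wd x hx)
      have h3 : HasDerivAt (fun d : ℝ => x.2 - d) (-1) x.1 := by
        exact (hasDerivAt_id' x.1).const_sub x.2
      have h4 : HasDerivAt (fun d => G (d, x.2)) (fderiv ℝ G x (1, 0)) x.1 :=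
        mySlice1 G x (hGd x hx)
      have hφ : HasDerivAt (fun d => d * x.2 * P₂W (d, x.2) + (x.2 - d) * G (d, x.2))
          (x.2 * P₂W (x.1, x.2) + x.1 * x.2 * fderiv ℝ P₂W x (1, 0) +
            (-1 * G (x.1, x.2) + (x.2 - x.1) * fderiv ℝ G x (1, 0))) x.1 :=
        (h1.mul h2).add (h3.mul h4)
      have hφ0 : HasDerivAt (fun d => d * x.2 * P₂W (d, x.2) + (x.2 - d) * G (d, x.2))
          0 x.1 := by
        refine (hasDerivAt_const x.1 0).congr_of_eventuallyEq ?_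
        filter_upwards [isOpen_Ioi.mem_nhds hx.1] with d hd
        exact hF₀ (d, x.2) ⟨hd, hx.2⟩
      have heq := hφ.unique hφ0
      have hE1 := hF₀ x hx
      have hE3 : x.1 ^ 2 * fderiv ℝ P₂W x (1, 0) = G x := by
        rw [hsymW x hx]; exact (hGval x hx).symm
      have hxx : (x.1, x.2) = x := Prod.mk.eta
      rw [hxx] at heq
      have hne1 : x.1 ≠ 0 := ne_of_gt hx.1
      have hne2 : x.2 - x.1 ≠ 0 := sub_ne_zero.2 hne
      have hkey : x.1 * (x.2 - x.1) * fderiv ℝ G x (1, 0) = 0 := by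
        linear_combination x.1 * heq - x.2 * hE3 - hE1
      exact (mul_eq_zero.mp hkey).resolve_left (mul_ne_zero hne1 hne2)
  -- the function η ↦ ∂₁ prad (δ, η)
  set A₁ : ℝ × ℝ → ℝ := fun y => fderiv ℝ P y (1, 0) with hA₁def
  have hA₁d : ∀ x ∈ S, DifferentiableAt ℝ A₁ x := fun x hx =>
    (hP1d x hx).clm_apply (differentiableAt_const _)
  have hahat : ∀ x ∈ S, ahat prad x.1 x.2 = A₁ x := by
    intro x hx
    exact (mySlice1 P x (hPd x hx)).deriv
  intro δ η₁ η₂ hδ hη₁ hη₂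
  have hAder : ∀ e : ℝ, e ∈ Ioi (0:ℝ) → HasDerivAt (fun t => A₁ (δ, t)) 0 e := by
    intro e he
    have hxS : ((δ, e) : ℝ × ℝ) ∈ S := ⟨hδ, he⟩
    have hs := mySlice2 A₁ (δ, e) (hA₁d _ hxS)
    have hzero : fderiv ℝ A₁ (δ, e) (0, 1) = 0 := by
      rw [hA₁def]
      rw [myClm P (δ, e) _ _ (hP1d _ hxS)]
      rw [(hPat _ hxS).isSymmSndFDerivAt (by simp) (0,1) (1,0)]
      rw [← myClm P (δ, e) _ _ (hP1d _ hxS)]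
      exact hDG0 (δ, e) hxS
    rw [hzero] at hs
    exact hs
  have hconst : (fun t => A₁ (δ, t)) η₁ = (fun t => A₁ (δ, t)) η₂ := by
    refine (convex_Ioi (0:ℝ)).is_const_of_fderivWithin_eq_zero (𝕜 := ℝ)
      (f := fun t => A₁ (δ, t)) ?_ ?_ hη₁ hη₂
    · exact fun e he => (hAder e he).differentiableAt.differentiableWithinAt
    · intro e he
      have h := (hAder e he).hasFDerivAt.hasFDerivWithinAt.fderivWithin
        (isOpen_Ioi.uniqueDiffWithinAt he)
      rw [h]
      ext
      simp
  have e1 := hahat (δ, η₁) ⟨hδ, hη₁⟩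
  have e2 := hahat (δ, η₂) ⟨hδ, hη₂⟩
  simp only at e1 e2
  rw [e1, e2]
  exact hconst

/-- If a hyperelastic constitutive function has `b̂ ≡ 0` off the diagonal, then
`∂_δ p̂_rad` does not depend on `η`; consequently `(p̂_rad,p̂_tan)` is dynamically
equivalent to a fluid constitutive function. -/
theorem bhat_zero_dynEquiv_fluid (κ ν : ℝ) (hκ : 0 < κ) (hν : ν ∈ Ioc (-1 : ℝ) (1/2))
    (prad ptan : ℝ → ℝ → ℝ) (helastic : IsElasticConst κ ν prad ptan)
    (hhyper : ∃ w : ℝ → ℝ → ℝ, IsStoredEnergy w prad ptan)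
    (hb : ∀ δ η : ℝ, 0 < δ → 0 < η → η ≠ δ → bhat prad ptan δ η = 0) :
    (∀ δ η₁ η₂ : ℝ, 0 < δ → 0 < η₁ → 0 < η₂ → ahat prad δ η₁ = ahat prad δ η₂) ∧
    (∃ (κ' ν' : ℝ) (pfl : ℝ → ℝ),
      IsElasticConst κ' ν' (fun δ _ => pfl δ) (fun δ _ => pfl δ) ∧
      DynEquiv prad ptan (fun δ _ => pfl δ) (fun δ _ => pfl δ)) := by
  obtain ⟨w, hw3, hw11, hrad, htan⟩ := hhyper
  obtain ⟨hPc, hTc, hdiag, hder, h11, ht11, hrest⟩ := helastic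
  have hmain := key prad ptan w hPc hw3 hrad htan hb
  refine ⟨hmain, ?_⟩
  refine ⟨deriv (fun d => prad d 1) 1, 1/2, fun d => prad d 1, ?_, ?_, ?_⟩
  · -- IsElasticConst
    refine ⟨?_, ?_, fun δ _ => rfl, fun δ _ => deriv_const _ _, h11, h11, ?_, ?_, ?_, ?_⟩
    · have hcomp : (fun p : ℝ × ℝ => prad p.1 1) =
          (fun q : ℝ × ℝ => prad q.1 q.2) ∘ (fun p : ℝ × ℝ => (p.1, 1)) := rfl
      rw [hcomp]
      exact hPc.comp ((contDiff_fst.prodMk contDiff_const).contDiffOn)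
        (fun p hp => ⟨hp.1, by norm_num⟩)
    · have hcomp : (fun p : ℝ × ℝ => prad p.1 1) =
          (fun q : ℝ × ℝ => prad q.1 q.2) ∘ (fun p : ℝ × ℝ => (p.1, 1)) := rfl
      rw [hcomp]
      exact hPc.comp ((contDiff_fst.prodMk contDiff_const).contDiffOn)
        (fun p hp => ⟨hp.1, by norm_num⟩)
    · ring
    · rw [deriv_const]
      ring
    · ring
    · rw [deriv_const]
      ring
  · -- ahat equality
    intro δ η hδ hη
    show ahat prad δ η = ahat prad δ 1
    exact hmain δ η 1 hδ hη one_pos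
  · -- bhat equality
    intro δ η hδ hη hne
    rw [hb δ η hδ hη hne]
    simp [bhat]
end
end

section
/- Let (p̂_rad,p̂_tan) be a hyperelastic constitutive function for spherically symmetric bodies with stored energy ŵ. If the strong Baker–Ericksen inequality holds, i.e., (p̂_tan(δ,η)−p̂_rad(δ,η))/(η−δ) ≥ 0 for all δ,η>0 with η≠δ, then ŵ(δ,η) ≥ ŵ(δ,δ) for all δ,η>0. If only the weak Baker–Ericksen inequality holds, i.e., (p̂_tan(δ,η)−p̂_rad(δ,η))/(η−δ) ≥ 0 for all η>δ>0, then ŵ(δ,η) ≥ ŵ(δ,δ) for all η ≥ δ > 0. -/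
open Real Set Filter Topology

noncomputable section

/-- Under the strong Baker–Ericksen inequality the stored energy satisfies
`ŵ(δ,η) ≥ ŵ(δ,δ)` on all of `(0,∞)²`; under the weak Baker–Ericksen inequality it
satisfies `ŵ(δ,η) ≥ ŵ(δ,δ)` for all `η ≥ δ > 0`. -/
theorem storedEnergy_ge_of_BakerEricksen (κ ν : ℝ) (hκ : 0 < κ)
    (hν : ν ∈ Ioc (-1 : ℝ) (1/2)) (prad ptan w : ℝ → ℝ → ℝ)
    (helastic : IsElasticConst κ ν prad ptan)
    (hw : IsStoredEnergy w prad ptan) :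
    ((∀ δ η : ℝ, 0 < δ → 0 < η → η ≠ δ →
        0 ≤ (ptan δ η - prad δ η) / (η - δ)) →
      ∀ δ η : ℝ, 0 < δ → 0 < η → w δ δ ≤ w δ η) ∧
    ((∀ δ η : ℝ, 0 < δ → δ < η →
        0 ≤ (ptan δ η - prad δ η) / (η - δ)) →
      ∀ δ η : ℝ, 0 < δ → δ ≤ η → w δ δ ≤ w δ η) := 
by
  obtain ⟨hw3, -, -, hwtan⟩ := hw
  -- regularity of `e ↦ w δ e` on `(0,∞)` for each fixed `δ > 0`
  have hreg : ∀ δ : ℝ, 0 < δ → ContDiffOn ℝ 3 (fun e => w δ e) (Ioi 0) := by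
    intro δ hδ
    have hmaps : MapsTo (fun e : ℝ => ((δ, e) : ℝ × ℝ)) (Ioi 0) (Ioi 0 ×ˢ Ioi 0) :=
      fun e he => ⟨hδ, he⟩
    exact hw3.comp ((contDiff_const.prodMk contDiff_id).contDiffOn) hmaps
  have hdiff : ∀ δ : ℝ, 0 < δ → DifferentiableOn ℝ (fun e => w δ e) (Ioi 0) := by
    intro δ hδ
    exact (hreg δ hδ).differentiableOn (by norm_num)
  -- sign of the derivative from the sign of `ptan - prad`
  have hderiv_sign_pos : ∀ δ x : ℝ, 0 < δ → 0 < x →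
      0 ≤ ptan δ x - prad δ x → 0 ≤ deriv (fun e => w δ e) x := by
    intro δ x hδ hx h
    have heq := hwtan δ x hδ hx
    nlinarith [mul_pos hδ hx]
  have hderiv_sign_neg : ∀ δ x : ℝ, 0 < δ → 0 < x →
      ptan δ x - prad δ x ≤ 0 → deriv (fun e => w δ e) x ≤ 0 := by
    intro δ x hδ hx h
    have heq := hwtan δ x hδ hx
    nlinarith [mul_pos hδ hx]
  -- monotonicity argument for `η ≥ δ`
  have mono : ∀ δ η : ℝ, 0 < δ → δ ≤ η →
      (∀ x ∈ Ioo δ η, 0 ≤ deriv (fun e => w δ e) x) → w δ δ ≤ w δ η := by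
    intro δ η hδ hδη hsign
    have hsub : Icc δ η ⊆ Ioi 0 := fun x hx => lt_of_lt_of_le hδ hx.1
    have hsub2 : Ioo δ η ⊆ Ioi 0 := fun x hx => lt_trans hδ hx.1
    have hm : MonotoneOn (fun e => w δ e) (Icc δ η) := by
      apply monotoneOn_of_deriv_nonneg (convex_Icc δ η)
        ((hdiff δ hδ).continuousOn.mono hsub)
      · rw [interior_Icc]
        exact (hdiff δ hδ).mono hsub2
      · rw [interior_Icc]
        exact hsign
    exact hm (left_mem_Icc.2 hδη) (right_mem_Icc.2 hδη) hδη
  -- antitonicity argument for `η ≤ δ`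
  have anti : ∀ δ η : ℝ, 0 < η → η ≤ δ →
      (∀ x ∈ Ioo η δ, deriv (fun e => w δ e) x ≤ 0) → w δ δ ≤ w δ η := by
    intro δ η hη hηδ hsign
    have hδ : 0 < δ := lt_of_lt_of_le hη hηδ
    have hsub : Icc η δ ⊆ Ioi 0 := fun x hx => lt_of_lt_of_le hη hx.1
    have hsub2 : Ioo η δ ⊆ Ioi 0 := fun x hx => lt_trans hη hx.1
    have hm : AntitoneOn (fun e => w δ e) (Icc η δ) := by
      apply antitoneOn_of_deriv_nonpos (convex_Icc η δ)
        ((hdiff δ hδ).continuousOn.mono hsub)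
      · rw [interior_Icc]
        exact (hdiff δ hδ).mono hsub2
      · rw [interior_Icc]
        exact hsign
    exact hm (left_mem_Icc.2 hηδ) (right_mem_Icc.2 hηδ) hηδ
  constructor
  · -- strong Baker–Ericksen
    intro hBE δ η hδ hη
    rcases le_or_gt δ η with hle | hlt
    · apply mono δ η hδ hle
      intro x hx
      have hx0 : 0 < x := lt_trans hδ hx.1
      have hbe := hBE δ x hδ hx0 (ne_of_gt hx.1)
      have hxd : 0 < x - δ := sub_pos.2 hx.1
      have h2 := mul_nonneg hbe hxd.le
      rw [div_mul_cancel₀ _ (ne_of_gt hxd)] at h2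
      exact hderiv_sign_pos δ x hδ hx0 h2
    · apply anti δ η hη hlt.le
      intro x hx
      have hx0 : 0 < x := lt_trans hη hx.1
      have hbe := hBE δ x hδ hx0 (ne_of_lt hx.2)
      have hxd : x - δ < 0 := sub_neg.2 hx.2
      have h2 : ptan δ x - prad δ x ≤ 0 := by
        by_contra hcon
        push_neg at hcon
        have : (ptan δ x - prad δ x) / (x - δ) < 0 := div_neg_of_pos_of_neg hcon hxd
        linarith
      exact hderiv_sign_neg δ x hδ hx0 h2
  · -- weak Baker–Ericksen
    intro hBE δ η hδ hle
    apply mono δ η hδ hle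
    intro x hx
    have hx0 : 0 < x := lt_trans hδ hx.1
    have hbe := hBE δ x hδ hx.1
    have hxd : 0 < x - δ := sub_pos.2 hx.1
    have h2 := mul_nonneg hbe hxd.le
    rw [div_mul_cancel₀ _ (ne_of_gt hxd)] at h2
    exact hderiv_sign_pos δ x hδ hx0 h2
end
end

section
/- Let (p̂_rad,p̂_tan) be an elastic constitutive function for spherically symmetric bodies with â(δ,δ)>0 for all δ>0, let G,K>0, and let δ (with associated η) be a regular solution of the static system on [0,R). Then η(r)>δ(r) and η'(r)<0 for all r∈(0,R). -/
open Real Set Filter Topology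

noncomputable section

/-- A regular solution of the static system on `[0,R)`: `δ ∈ C⁰([0,R)) ∩ C¹((0,R))`,
positive, with `η(r) = (3/r³)∫₀ʳ δ(s)s² ds` for `r ∈ (0,R)`, `η(0) = δ(0)`, and the
static equation `â(δ,η)δ' = [2(p̂_tan − p̂_rad) + 3(η−δ)∂_η p̂_rad]/r − (4πG/3)K²rηδ`. -/
def IsRegularStatic (prad ptan : ℝ → ℝ → ℝ) (G K R : ℝ) (δ η : ℝ → ℝ) : Prop :=
  ContinuousOn δ (Ico 0 R) ∧
  (∀ r ∈ Ioo 0 R, DifferentiableAt ℝ δ r) ∧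
  ContinuousOn (deriv δ) (Ioo 0 R) ∧
  (∀ r ∈ Ico 0 R, 0 < δ r) ∧
  η 0 = δ 0 ∧
  (∀ r ∈ Ioo 0 R, η r = 3 / r ^ 3 * ∫ s in (0:ℝ)..r, δ s * s ^ 2) ∧
  (∀ r ∈ Ioo 0 R,
    ahat prad (δ r) (η r) * deriv δ r =
      (2 * (ptan (δ r) (η r) - prad (δ r) (η r))
        + 3 * (η r - δ r) * deriv (fun e => prad (δ r) e) (η r)) / r
      - (4 * π * G / 3) * K ^ 2 * r * η r * δ r)

lemma sliceSnd {P : ℝ × ℝ → ℝ} {d e : ℝ} (h : DifferentiableAt ℝ P (d, e)) :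
    HasDerivAt (fun e' => P (d, e')) (fderiv ℝ P (d, e) (0, 1)) e := by
  have hc : HasDerivAt (fun e' : ℝ => ((d, e') : ℝ × ℝ)) ((0 : ℝ), (1 : ℝ)) e :=
    (hasDerivAt_const e d).prodMk (hasDerivAt_id e)
  simpa [Function.comp_def] using h.hasFDerivAt.comp_hasDerivAt e hc

lemma sliceFst {P : ℝ × ℝ → ℝ} {d e : ℝ} (h : DifferentiableAt ℝ P (d, e)) :
    HasDerivAt (fun d' => P (d', e)) (fderiv ℝ P (d, e) (1, 0)) d := by
  have hc : HasDerivAt (fun d' : ℝ => ((d', e) : ℝ × ℝ)) ((1 : ℝ), (0 : ℝ)) d :=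
    (hasDerivAt_id d).prodMk (hasDerivAt_const d e)
  simpa [Function.comp_def] using h.hasFDerivAt.comp_hasDerivAt d hc

set_option maxHeartbeats 2000000 in
/-- If `â(δ,δ) > 0` for all `δ > 0`, then along any regular static solution one has
`η(r) > δ(r)` and `η'(r) < 0` for all `r ∈ (0,R)`. -/
theorem regular_static_eta_gt_delta (κ ν G K R : ℝ) (hκ : 0 < κ)
    (hν : ν ∈ Ioc (-1 : ℝ) (1/2)) (hG : 0 < G) (hK : 0 < K) (hR : 0 < R)
    (prad ptan : ℝ → ℝ → ℝ) (helastic : IsElasticConst κ ν prad ptan)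
    (ha : ∀ d : ℝ, 0 < d → 0 < ahat prad d d)
    (δ η : ℝ → ℝ) (hreg : IsRegularStatic prad ptan G K R δ η) :
    ∀ r ∈ Ioo 0 R, δ r < η r ∧ deriv η r < 0 := by
  obtain ⟨hPc, hQc, hdiag, hGdiag, -, -, -, -, -, -⟩ := helastic
  obtain ⟨hδc, hδd, -, hδpos, hη0, hηeq, heq⟩ := hreg
  set Ω : Set (ℝ × ℝ) := Ioi (0:ℝ) ×ˢ Ioi (0:ℝ) with hΩdef
  have hΩ : IsOpen Ω := isOpen_Ioi.prod isOpen_Ioi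
  set P : ℝ × ℝ → ℝ := fun p => prad p.1 p.2 with hPdef
  set Q : ℝ × ℝ → ℝ := fun p => ptan p.1 p.2 with hQdef
  have hPat : ∀ p ∈ Ω, ContDiffAt ℝ 2 P p := fun p hp => hPc.contDiffAt (hΩ.mem_nhds hp)
  have hQat : ∀ p ∈ Ω, ContDiffAt ℝ 2 Q p := fun p hp => hQc.contDiffAt (hΩ.mem_nhds hp)
  have hPd : ∀ p ∈ Ω, DifferentiableAt ℝ P p := fun p hp =>
    (hPat p hp).differentiableAt two_ne_zero
  have hQd : ∀ p ∈ Ω, DifferentiableAt ℝ Q p := fun p hp =>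
    (hQat p hp).differentiableAt two_ne_zero
  set g2 : ℝ × ℝ → ℝ := fun p => fderiv ℝ P p (0, 1) with hg2def
  set gQ : ℝ × ℝ → ℝ := fun p => fderiv ℝ Q p (0, 1) with hgQdef
  set a2 : ℝ × ℝ → ℝ := fun p => fderiv ℝ P p (1, 0) with ha2def
  have hg2c : ∀ p ∈ Ω, ContDiffAt ℝ 1 g2 p := fun p hp =>
    ((hPat p hp).fderiv_right (by norm_num)).clm_apply contDiffAt_const
  have hg2on : ContDiffOn ℝ 1 g2 Ω := fun p hp => (hg2c p hp).contDiffWithinAt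
  have hfg2cont : ContinuousOn (fun p => fderiv ℝ g2 p (0, 1)) Ω := by
    have h1 : ContinuousOn (fderiv ℝ g2) Ω := hg2on.continuousOn_fderiv_of_isOpen hΩ le_rfl
    exact (ContinuousLinearMap.apply ℝ ℝ ((0:ℝ), (1:ℝ))).continuous.comp_continuousOn h1
  have hfP : ContinuousOn (fderiv ℝ P) Ω := hPc.continuousOn_fderiv_of_isOpen hΩ (by norm_num)
  have hfQ : ContinuousOn (fderiv ℝ Q) Ω := hQc.continuousOn_fderiv_of_isOpen hΩ (by norm_num)
  have hg2cont : ContinuousOn g2 Ω :=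
    (ContinuousLinearMap.apply ℝ ℝ ((0:ℝ), (1:ℝ))).continuous.comp_continuousOn hfP
  have hgQcont : ContinuousOn gQ Ω :=
    (ContinuousLinearMap.apply ℝ ℝ ((0:ℝ), (1:ℝ))).continuous.comp_continuousOn hfQ
  have ha2cont : ContinuousOn a2 Ω :=
    (ContinuousLinearMap.apply ℝ ℝ ((1:ℝ), (0:ℝ))).continuous.comp_continuousOn hfP
  have hsliceP : ∀ p ∈ Ω, HasDerivAt (fun e => prad p.1 e) (g2 p) p.2 := fun p hp =>
    sliceSnd (hPd p hp)
  have hsliceQ : ∀ p ∈ Ω, HasDerivAt (fun e => ptan p.1 e) (gQ p) p.2 := fun p hp =>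
    sliceSnd (hQd p hp)
  have hahat : ∀ p ∈ Ω, ahat prad p.1 p.2 = a2 p := by
    intro p hp
    have := (sliceFst (hPd p hp)).deriv
    simpa [ahat] using this
  -- Hf : derivative in e of the slice of Ff
  set Hf : ℝ × ℝ → ℝ := fun p => g2 p + 2 * gQ p + 3 * (p.2 - p.1) * fderiv ℝ g2 p (0, 1)
    with hHdef
  have hHcont : ContinuousOn Hf Ω := by
    apply ContinuousOn.add
    · exact hg2cont.add (continuousOn_const.mul hgQcont)
    · exact (continuousOn_const.mul ((continuous_snd.sub continuous_fst).continuousOn)).mul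
        hfg2cont
  have hHdiag : ∀ d : ℝ, 0 < d → Hf (d, d) = 0 := by
    intro d hd
    have hdΩ : ((d, d) : ℝ × ℝ) ∈ Ω := ⟨hd, hd⟩
    have h1 : HasDerivAt (fun e => prad d e) (g2 (d, d)) d := hsliceP _ hdΩ
    have h2 : HasDerivAt (fun e => ptan d e) (gQ (d, d)) d := hsliceQ _ hdΩ
    have h3 : HasDerivAt (fun e => prad d e + 2 * ptan d e) (g2 (d, d) + 2 * gQ (d, d)) d :=
      h1.add (h2.const_mul 2)
    have h4 := h3.deriv
    have h5 : g2 (d, d) + 2 * gQ (d, d) = 0 := by rw [← h4, hGdiag d hd]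
    simp only [hHdef]
    simp only [sub_self, mul_zero, zero_mul, add_zero]
    linarith [h5]
  set Ff : ℝ × ℝ → ℝ := fun p => 2 * (Q p - P p) + 3 * (p.2 - p.1) * g2 p with hFdef
  have hFdiagzero : ∀ d : ℝ, 0 < d → Ff (d, d) = 0 := by
    intro d hd
    simp only [hFdef, hPdef, hQdef, hg2def]
    simp [hdiag d hd]
  have hFslice : ∀ p ∈ Ω, HasDerivAt (fun e => Ff (p.1, e)) (Hf p) p.2 := by
    intro p hp
    have h1 : HasDerivAt (fun e => Q (p.1, e)) (gQ p) p.2 := sliceSnd (hQd p hp)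
    have h2 : HasDerivAt (fun e => P (p.1, e)) (g2 p) p.2 := sliceSnd (hPd p hp)
    have h3 : HasDerivAt (fun e => g2 (p.1, e)) (fderiv ℝ g2 p (0, 1)) p.2 :=
      sliceSnd ((hg2c p hp).differentiableAt one_ne_zero)
    have h5 : HasDerivAt (fun e : ℝ => 3 * (e - p.1)) 3 p.2 := by
      simpa using ((hasDerivAt_id p.2).sub_const p.1).const_mul (3:ℝ)
    have h4 := h5.mul h3
    have h6 := ((h1.sub h2).const_mul 2).add h4
    have h7 : 2 * (gQ p - g2 p) + (3 * g2 (p.1, p.2) + 3 * (p.2 - p.1) * fderiv ℝ g2 p (0, 1))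
        = Hf p := by
      simp only [hHdef]
      ring
    rw [← h7]
    exact h6
  -- positivity of η and derivative of η
  have hδcont : ∀ r ∈ Ioo 0 R, ContinuousAt δ r := fun r hr => (hδd r hr).continuousAt
  have hcontOn : ContinuousOn (fun s => δ s * s ^ 2) (Ioo 0 R) := fun s hs =>
    ((hδcont s hs).mul ((continuous_pow 2).continuousAt)).continuousWithinAt
  have hint : ∀ r ∈ Ioo 0 R, IntervalIntegrable (fun s => δ s * s ^ 2)
      MeasureTheory.volume 0 r := by
    intro r hr
    apply ContinuousOn.intervalIntegrable
    have hsub : uIcc (0:ℝ) r ⊆ Ico 0 R := by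
      rw [uIcc_of_le hr.1.le]
      exact Icc_subset_Ico_right hr.2
    exact (hδc.mono hsub).mul ((continuous_pow 2).continuousOn)
  have hInt : ∀ r ∈ Ioo 0 R, HasDerivAt (fun u => ∫ s in (0:ℝ)..u, δ s * s ^ 2)
      (δ r * r ^ 2) r := by
    intro r hr
    exact intervalIntegral.integral_hasDerivAt_right (hint r hr)
      (hcontOn.stronglyMeasurableAtFilter isOpen_Ioo r hr)
      (((hδcont r hr).mul ((continuous_pow 2).continuousAt)))
  have hηd : ∀ r ∈ Ioo 0 R, HasDerivAt η (3 * (δ r - η r) / r) r := by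
    intro r hr
    have hr0 : (0:ℝ) < r := hr.1
    have hI := hInt r hr
    have hc : HasDerivAt (fun u : ℝ => 3 / u ^ 3) (-9 / r ^ 4) r := by
      have h1 : HasDerivAt (fun u : ℝ => u ^ 3) (3 * r ^ 2) r := by
        simpa using hasDerivAt_pow 3 r
      have h2 := (h1.inv (by positivity)).const_mul (3:ℝ)
      have heqf : (fun u : ℝ => 3 / u ^ 3) = fun u : ℝ => 3 * (u ^ 3)⁻¹ := by
        funext u; rw [div_eq_mul_inv]
      rw [heqf]
      refine h2.congr_deriv ?_
      field_simp
      ring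
    have hmul := hc.mul hI
    have heta : η =ᶠ[𝓝 r] fun u => 3 / u ^ 3 * ∫ s in (0:ℝ)..u, δ s * s ^ 2 := by
      filter_upwards [isOpen_Ioo.mem_nhds hr] with u hu
      exact hηeq u hu
    have hval : η r = 3 / r ^ 3 * ∫ s in (0:ℝ)..r, δ s * s ^ 2 := hηeq r hr
    have hfin := hmul.congr_of_eventuallyEq heta
    refine hfin.congr_deriv ?_
    rw [hval]
    field_simp
    ring
  have hηpos : ∀ r ∈ Ioo 0 R, 0 < η r := by
    intro r hr
    rw [hηeq r hr]
    have hIpos : 0 < ∫ s in (0:ℝ)..r, δ s * s ^ 2 :=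
      intervalIntegral.intervalIntegral_pos_of_pos_on (hint r hr)
        (fun s hs => mul_pos (hδpos s ⟨hs.1.le, hs.2.trans hr.2⟩) (pow_pos hs.1 2)) hr.1
    have h3 : (0:ℝ) < 3 / r ^ 3 := div_pos (by norm_num) (pow_pos hr.1 3)
    exact mul_pos h3 hIpos
  set δ₀ := δ 0 with hδ₀def
  have hδ₀pos : 0 < δ₀ := hδpos 0 ⟨le_refl 0, hR⟩
  -- limits at 0
  have hδlim : Tendsto δ (𝓝[Ioo 0 R] 0) (𝓝 δ₀) :=
    (hδc 0 ⟨le_refl 0, hR⟩).mono_left (nhdsWithin_mono 0 Ioo_subset_Ico_self)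
  have hηlim : Tendsto η (𝓝[Ioo 0 R] 0) (𝓝 δ₀) := by
    rw [Metric.tendsto_nhdsWithin_nhds]
    intro ε hε
    have hδ0cont : ContinuousWithinAt δ (Ico 0 R) 0 := hδc 0 ⟨le_refl 0, hR⟩
    rw [Metric.continuousWithinAt_iff] at hδ0cont
    obtain ⟨ρ', hρ'pos, hρ'⟩ := hδ0cont (ε/4) (by linarith)
    refine ⟨min ρ' R, lt_min hρ'pos hR, ?_⟩
    intro r hrmem hrdist
    have hr0 : 0 < r := hrmem.1
    have hrρ' : r < ρ' := by
      have : dist r 0 < ρ' := lt_of_lt_of_le hrdist (min_le_left _ _)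
      rwa [Real.dist_eq, sub_zero, abs_of_pos hr0] at this
    have hintc : IntervalIntegrable (fun s : ℝ => δ₀ * s ^ 2) MeasureTheory.volume 0 r :=
      (Continuous.intervalIntegrable (continuous_const.mul (continuous_pow 2)) 0 r)
    have hsplit : (∫ s in (0:ℝ)..r, δ s * s ^ 2) - ∫ s in (0:ℝ)..r, δ₀ * s ^ 2
        = ∫ s in (0:ℝ)..r, (δ s - δ₀) * s ^ 2 := by
      rw [← intervalIntegral.integral_sub (hint r hrmem) hintc]
      congr 1
      ext s
      ring
    have hconst : (∫ s in (0:ℝ)..r, δ₀ * s ^ 2) = δ₀ * (r ^ 3 / 3) := by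
      rw [intervalIntegral.integral_const_mul]
      norm_num [integral_pow]
    have hbound : ‖∫ s in (0:ℝ)..r, (δ s - δ₀) * s ^ 2‖ ≤ ε/4 * r ^ 2 * |r - 0| := by
      apply intervalIntegral.norm_integral_le_of_norm_le_const
      intro s hs
      rw [uIoc_of_le hr0.le] at hs
      have hs0 : 0 < s := hs.1
      have hsr : s ≤ r := hs.2
      have hsmem : s ∈ Ico 0 R := ⟨hs0.le, lt_of_le_of_lt hsr hrmem.2⟩
      have hsd : dist s 0 < ρ' := by
        rw [Real.dist_eq, sub_zero, abs_of_pos hs0]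
        exact lt_of_le_of_lt hsr hrρ'
      have h1 := hρ' hsmem hsd
      rw [Real.dist_eq] at h1
      have h2 : ‖(δ s - δ₀) * s ^ 2‖ = |δ s - δ₀| * s ^ 2 := by
        rw [norm_mul]
        simp [abs_of_nonneg (sq_nonneg s)]
      rw [h2]
      apply mul_le_mul h1.le (by nlinarith) (by positivity) (by linarith)
    have hηsub : η r - δ₀ = 3 / r ^ 3 * ∫ s in (0:ℝ)..r, (δ s - δ₀) * s ^ 2 := by
      rw [hηeq r hrmem, ← hsplit, hconst]
      field_simp
    rw [Real.dist_eq, hηsub]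
    rw [abs_mul, abs_of_pos (show (0:ℝ) < 3 / r ^ 3 by positivity)]
    have h3 : |∫ s in (0:ℝ)..r, (δ s - δ₀) * s ^ 2| ≤ ε/4 * r ^ 3 := by
      have : ε/4 * r ^ 2 * |r - 0| = ε/4 * r ^ 3 := by
        rw [sub_zero, abs_of_pos hr0]; ring
      rw [← this]
      exact hbound
    calc 3 / r ^ 3 * |∫ s in (0:ℝ)..r, (δ s - δ₀) * s ^ 2|
        ≤ 3 / r ^ 3 * (ε/4 * r ^ 3) := by
          apply mul_le_mul_of_nonneg_left h3 (by positivity)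
      _ = 3 * (ε/4) := by field_simp
      _ < ε := by linarith
  -- equation restated
  have hmemΩ : ∀ r ∈ Ioo 0 R, ((δ r, η r) : ℝ × ℝ) ∈ Ω :=
    fun r hr => ⟨hδpos r ⟨hr.1.le, hr.2⟩, hηpos r hr⟩
  have hEQ : ∀ r ∈ Ioo 0 R, a2 (δ r, η r) * deriv δ r =
      Ff (δ r, η r) / r - 4 * π * G / 3 * K ^ 2 * r * η r * δ r := by
    intro r hr
    have hmem := hmemΩ r hr
    have h1 := heq r hr
    rw [show ahat prad (δ r) (η r) = a2 (δ r, η r) from hahat _ hmem] at h1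
    rw [show deriv (fun e => prad (δ r) e) (η r) = g2 (δ r, η r) from (hsliceP _ hmem).deriv]
      at h1
    have hFval : Ff (δ r, η r) = 2 * (ptan (δ r) (η r) - prad (δ r) (η r))
        + 3 * (η r - δ r) * g2 (δ r, η r) := by
      simp only [hFdef, hPdef, hQdef]
    rw [hFval]
    exact h1
  -- derivative of f = δ - η
  have hfd : ∀ t ∈ Ioo 0 R, HasDerivAt (fun u => δ u - η u)
      (deriv δ t - 3 * (δ t - η t) / t) t := by
    intro t ht
    exact ((hδd t ht).hasDerivAt).sub (hηd t ht)
  -- constant c positivity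
  have hcK : (0:ℝ) < 4 * π * G / 3 * K ^ 2 := by
    have h1 : (0:ℝ) < 4 * π := by positivity
    have h2 : (0:ℝ) < 4 * π * G := mul_pos h1 hG
    have h3 : (0:ℝ) < 4 * π * G / 3 := by linarith
    exact mul_pos h3 (pow_pos hK 2)
  -- Lemma Z : at a zero of f, f' < 0
  have hZ : ∀ t ∈ Ioo 0 R, δ t = η t → deriv δ t - 3 * (δ t - η t) / t < 0 := by
    intro t ht heqd
    have hδt : 0 < δ t := hδpos t ⟨ht.1.le, ht.2⟩
    have h1 := hEQ t ht
    rw [← heqd] at h1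
    rw [hFdiagzero (δ t) hδt] at h1
    have ha2pos : 0 < a2 (δ t, δ t) := by
      rw [← hahat (δ t, δ t) ⟨hδt, hδt⟩]
      exact ha (δ t) hδt
    have hcpos : 0 < 4 * π * G / 3 * K ^ 2 * t * δ t * δ t :=
      mul_pos (mul_pos (mul_pos hcK ht.1) hδt) hδt
    have hprod : a2 (δ t, δ t) * deriv δ t < 0 := by
      rw [h1, zero_div, zero_sub]
      linarith
    have hd' : deriv δ t < 0 := by
      by_contra hcon
      push_neg at hcon
      nlinarith
    have : 3 * (δ t - η t) / t = 0 := by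
      rw [← heqd, sub_self, mul_zero, zero_div]
    linarith
  -- setup of the ball around (δ₀, δ₀)
  set A := ahat prad δ₀ δ₀ with hAdef
  have hApos : 0 < A := ha δ₀ hδ₀pos
  have hx₀ : ((δ₀, δ₀) : ℝ × ℝ) ∈ Ω := ⟨hδ₀pos, hδ₀pos⟩
  have hHx₀ : Hf (δ₀, δ₀) = 0 := hHdiag δ₀ hδ₀pos
  have ha2x₀ : a2 (δ₀, δ₀) = A := (hahat _ hx₀).symm
  obtain ⟨ρ₁, hρ₁pos, hρ₁⟩ := Metric.isOpen_iff.mp hΩ _ hx₀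
  have hHca : ContinuousAt Hf (δ₀, δ₀) := hHcont.continuousAt (hΩ.mem_nhds hx₀)
  obtain ⟨ρ₂, hρ₂pos, hρ₂⟩ := Metric.continuousAt_iff.mp hHca (A/2) (by linarith)
  have ha2ca : ContinuousAt a2 (δ₀, δ₀) := ha2cont.continuousAt (hΩ.mem_nhds hx₀)
  obtain ⟨ρ₃, hρ₃pos, hρ₃⟩ := Metric.continuousAt_iff.mp ha2ca (A/2) (by linarith)
  set ρ := min ρ₁ (min ρ₂ ρ₃) with hρdef
  have hρpos : 0 < ρ := lt_min hρ₁pos (lt_min hρ₂pos hρ₃pos)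
  have hballprop : ∀ p : ℝ × ℝ, dist p (δ₀, δ₀) < ρ → p ∈ Ω ∧ |Hf p| < A/2 ∧ A/2 < a2 p := by
    intro p hp
    refine ⟨hρ₁ (Metric.mem_ball.mpr (lt_of_lt_of_le hp (min_le_left _ _))), ?_, ?_⟩
    · have := hρ₂ (lt_of_lt_of_le hp (le_trans (min_le_right _ _) (min_le_left _ _)))
      rwa [hHx₀, Real.dist_eq, sub_zero] at this
    · have := hρ₃ (lt_of_lt_of_le hp (le_trans (min_le_right _ _) (min_le_right _ _)))
      rw [ha2x₀, Real.dist_eq] at this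
      have h2 := (abs_lt.mp this).1
      linarith
  have hdistmk : ∀ a b : ℝ, |a - δ₀| < ρ → |b - δ₀| < ρ →
      dist ((a, b) : ℝ × ℝ) ((δ₀, δ₀) : ℝ × ℝ) < ρ := by
    intro a b h1 h2
    rw [Prod.dist_eq]
    simp only [Real.dist_eq]
    exact max_lt h1 h2
  -- MVT bound for Ff near the diagonal
  have hMVT : ∀ d e : ℝ, |d - δ₀| < ρ → |e - δ₀| < ρ → e < d →
      |Ff (d, e)| ≤ A/2 * (d - e) := by
    intro d e hd he hde
    have hseg : ∀ t ∈ Icc e d, dist ((d, t) : ℝ × ℝ) ((δ₀, δ₀) : ℝ × ℝ) < ρ := by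
      intro t ht
      apply hdistmk _ _ hd
      rw [abs_lt] at hd he ⊢
      constructor
      · linarith [ht.1, he.1]
      · linarith [ht.2, hd.2]
    have hcont : ContinuousOn (fun t => Ff (d, t)) (Icc e d) := by
      intro t ht
      exact ((hFslice (d, t) (hballprop _ (hseg t ht)).1).continuousAt).continuousWithinAt
    have hder : ∀ t ∈ Ioo e d, HasDerivAt (fun t => Ff (d, t)) (Hf (d, t)) t := fun t ht =>
      hFslice (d, t) (hballprop _ (hseg t ⟨ht.1.le, ht.2.le⟩)).1
    obtain ⟨ξ, hξ, hslope⟩ := exists_hasDerivAt_eq_slope (fun t => Ff (d, t))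
      (fun t => Hf (d, t)) hde hcont hder
    have hd0 : (0:ℝ) < d := (hballprop _ (hseg d ⟨hde.le, le_refl d⟩)).1.1
    rw [hFdiagzero d hd0] at hslope
    have hξball := hseg ξ ⟨hξ.1.le, hξ.2.le⟩
    have hHb : |Hf (d, ξ)| < A/2 := (hballprop _ hξball).2.1
    have hpos : 0 < d - e := sub_pos.mpr hde
    have hFe : Ff (d, e) = -(Hf (d, ξ) * (d - e)) := by
      field_simp at hslope
      linarith
    rw [hFe, abs_neg, abs_mul, abs_of_pos hpos]
    exact mul_le_mul_of_nonneg_right hHb.le hpos.le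
  -- key differential inequality
  have hKI : ∀ r ∈ Ioo 0 R, |δ r - δ₀| < ρ → |η r - δ₀| < ρ → 0 ≤ δ r - η r →
      deriv δ r - 3 * (δ r - η r) / r < 0 := by
    intro r hr hd he hf
    rcases eq_or_lt_of_le hf with hf0 | hfpos
    · exact hZ r hr (by linarith)
    · have hr0 : 0 < r := hr.1
      have hηr : η r < δ r := by linarith
      have hFb : |Ff (δ r, η r)| ≤ A/2 * (δ r - η r) := hMVT (δ r) (η r) hd he hηr
      have ha2b : A/2 < a2 (δ r, η r) := (hballprop _ (hdistmk _ _ hd he)).2.2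
      have ha2pos : 0 < a2 (δ r, η r) := by linarith
      have h1 := hEQ r hr
      have hcpos : 0 < 4 * π * G / 3 * K ^ 2 * r * η r * δ r :=
        mul_pos (mul_pos (mul_pos hcK hr0) (hηpos r hr)) (hδpos r ⟨hr0.le, hr.2⟩)
      have hFr : Ff (δ r, η r) / r ≤ A/2 * (δ r - η r) / r :=
        (div_le_div_iff_of_pos_right hr0).mpr (abs_le.mp hFb).2
      have h2 : a2 (δ r, η r) * deriv δ r < A/2 * ((δ r - η r) / r) := by
        rw [mul_div_assoc] at hFr
        linarith
      have hfr : 0 < (δ r - η r) / r := div_pos hfpos hr0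
      have h3 : A/2 * ((δ r - η r) / r) < a2 (δ r, η r) * ((δ r - η r) / r) :=
        mul_lt_mul_of_pos_right ha2b hfr
      have h5 : deriv δ r < (δ r - η r) / r :=
        lt_of_mul_lt_mul_left (by linarith) ha2pos.le
      have h6 : 3 * (δ r - η r) / r = 3 * ((δ r - η r) / r) := mul_div_assoc 3 _ _
      linarith
  -- no upward crossing
  have hW : ∀ s w : ℝ, 0 < s → s < w → w < R → δ s - η s < 0 → 0 ≤ δ w - η w → False := by
    intro s w hs hsw hwR hfs hfw
    have hfcont : ContinuousOn (fun u => δ u - η u) (Icc s w) := by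
      intro u hu
      have huI : u ∈ Ioo 0 R := ⟨hs.trans_le hu.1, lt_of_le_of_lt hu.2 hwR⟩
      exact ((hfd u huI).continuousAt).continuousWithinAt
    set T := Icc s w ∩ (fun u => δ u - η u) ⁻¹' Ici 0 with hTdef
    have hTne : T.Nonempty := ⟨w, ⟨hsw.le, le_refl w⟩, hfw⟩
    have hTclosed : IsClosed T :=
      hfcont.preimage_isClosed_of_isClosed isClosed_Icc isClosed_Ici
    have hTbdd : BddBelow T := ⟨s, fun u hu => hu.1.1⟩
    set t := sInf T with htdef
    have htT : t ∈ T := hTclosed.csInf_mem hTne hTbdd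
    have htw : t ≤ w := htT.1.2
    have hts : s < t := by
      rcases eq_or_lt_of_le htT.1.1 with h | h
      · exfalso
        have h2 : (0:ℝ) ≤ δ t - η t := htT.2
        rw [← h] at h2
        linarith
      · exact h
    have htmem : t ∈ Ioo 0 R := ⟨hs.trans hts, lt_of_le_of_lt htw hwR⟩
    have hbelow : ∀ u, s ≤ u → u < t → δ u - η u < 0 := by
      intro u hu1 hu2
      by_contra hcon
      push_neg at hcon
      have humem : u ∈ T := ⟨⟨hu1, le_trans hu2.le htw⟩, hcon⟩
      exact absurd (csInf_le hTbdd humem) (not_le.mpr hu2)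
    have hft : δ t - η t = 0 := by
      rcases eq_or_lt_of_le (show (0:ℝ) ≤ δ t - η t from htT.2) with h | h
      · exact h.symm
      · exfalso
        have hca : ContinuousAt (fun u => δ u - η u) t := (hfd t htmem).continuousAt
        have hev : ∀ᶠ u in 𝓝[<] t, 0 < δ u - η u := by
          have h2 : ∀ᶠ u in 𝓝 t, 0 < δ u - η u := hca.eventually_const_lt h
          exact h2.filter_mono nhdsWithin_le_nhds
        have hIoo : ∀ᶠ u in 𝓝[<] t, u ∈ Ioo s t :=
          Ioo_mem_nhdsLT_of_mem ⟨hts, le_refl t⟩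
        obtain ⟨u, hu1, hu2⟩ := (hev.and hIoo).exists
        exact absurd hu1 (not_lt.mpr (hbelow u hu2.1.le hu2.2).le)
    have hneg : deriv δ t - 3 * (δ t - η t) / t < 0 := hZ t htmem (by linarith)
    have hder := hfd t htmem
    have hslope := hasDerivAt_iff_tendsto_slope.mp hder
    have hslope' : Tendsto (slope (fun u => δ u - η u) t) (𝓝[<] t)
        (𝓝 (deriv δ t - 3 * (δ t - η t) / t)) :=
      hslope.mono_left (nhdsWithin_mono t (fun u hu => ne_of_lt hu))
    have hev2 : ∀ᶠ u in 𝓝[<] t, slope (fun u => δ u - η u) t u < 0 :=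
      hslope'.eventually_lt_const hneg
    have hIoo2 : ∀ᶠ u in 𝓝[<] t, u ∈ Ioo s t := Ioo_mem_nhdsLT_of_mem ⟨hts, le_refl t⟩
    obtain ⟨u, hu1, hu2⟩ := (hev2.and hIoo2).exists
    have hslopepos : 0 < slope (fun u => δ u - η u) t u := by
      rw [slope_def_field]
      apply div_pos_of_neg_of_neg
      · have := hbelow u hu2.1.le hu2.2
        linarith
      · linarith [hu2.2]
    linarith
  -- choice of ε from the limits
  obtain ⟨ε₁, hε₁pos, hε₁⟩ := Metric.tendsto_nhdsWithin_nhds.mp hδlim ρ hρpos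
  obtain ⟨ε₂, hε₂pos, hε₂⟩ := Metric.tendsto_nhdsWithin_nhds.mp hηlim ρ hρpos
  set ε := min (min ε₁ ε₂) R with hεdef
  have hεpos : 0 < ε := lt_min (lt_min hε₁pos hε₂pos) hR
  have hεR : ε ≤ R := min_le_right _ _
  have hball' : ∀ r ∈ Ioo 0 R, r < ε → |δ r - δ₀| < ρ ∧ |η r - δ₀| < ρ := by
    intro r hr hrε
    have hr0 : 0 < r := hr.1
    have hd1 : dist r 0 < ε₁ := by
      rw [Real.dist_eq, sub_zero, abs_of_pos hr0]
      calc r < ε := hrε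
        _ ≤ ε₁ := le_trans (min_le_left _ _) (min_le_left _ _)
    have hd2 : dist r 0 < ε₂ := by
      rw [Real.dist_eq, sub_zero, abs_of_pos hr0]
      calc r < ε := hrε
        _ ≤ ε₂ := le_trans (min_le_left _ _) (min_le_right _ _)
    constructor
    · have := hε₁ hr hd1
      rwa [Real.dist_eq] at this
    · have := hε₂ hr hd2
      rwa [Real.dist_eq] at this
  -- the filter 𝓝[Ioo 0 R] 0 is nontrivial
  haveI hNB : (𝓝[Ioo (0:ℝ) R] 0).NeBot := by
    rw [← mem_closure_iff_nhdsWithin_neBot, closure_Ioo hR.ne]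
    exact ⟨le_refl 0, hR.le⟩
  -- Step A : f < 0 on (0, ε)
  have hstepA : ∀ r ∈ Ioo 0 R, r < ε → δ r - η r < 0 := by
    by_contra hcon
    push_neg at hcon
    obtain ⟨r₁, hr₁, hr₁ε, hr₁f⟩ := hcon
    have hge : ∀ u ∈ Ioo 0 R, u ≤ r₁ → 0 ≤ δ u - η u := by
      intro u hu hur
      by_contra hneg'
      push_neg at hneg'
      rcases eq_or_lt_of_le hur with h | h
      · rw [h] at hneg'; linarith
      · exact hW u r₁ hu.1 h hr₁.2 hneg' hr₁f
    have hderneg : ∀ u ∈ Ioo 0 R, u ≤ r₁ → deriv δ u - 3 * (δ u - η u) / u < 0 := by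
      intro u hu hur
      have hub := hball' u hu (lt_of_le_of_lt hur hr₁ε)
      exact hKI u hu hub.1 hub.2 (hge u hu hur)
    have hmono : ∀ u w : ℝ, 0 < u → u < w → w ≤ r₁ → w < R → δ w - η w < δ u - η u := by
      intro u w hu huw hwr hwR'
      have hcont : ContinuousOn (fun v => δ v - η v) (Icc u w) := by
        intro v hv
        have hvI : v ∈ Ioo 0 R := ⟨hu.trans_le hv.1, lt_of_le_of_lt hv.2 hwR'⟩
        exact ((hfd v hvI).continuousAt).continuousWithinAt
      obtain ⟨ξ, hξ, hsl⟩ := exists_hasDerivAt_eq_slope (fun v => δ v - η v)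
        (fun v => deriv δ v - 3 * (δ v - η v) / v) huw hcont
        (fun x hx => hfd x ⟨hu.trans hx.1, hx.2.trans hwR'⟩)
      have hξI : ξ ∈ Ioo 0 R := ⟨hu.trans hξ.1, hξ.2.trans hwR'⟩
      have hneg := hderneg ξ hξI (hξ.2.le.trans hwr)
      rw [hsl] at hneg
      have hwu : 0 < w - u := sub_pos.mpr huw
      have h7 := mul_neg_of_neg_of_pos hneg hwu
      rw [div_mul_cancel₀ _ hwu.ne'] at h7
      linarith
    have hflim : Tendsto (fun u => δ u - η u) (𝓝[Ioo 0 R] 0) (𝓝 0) := by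
      have := hδlim.sub hηlim
      simpa using this
    have hhalf : r₁ / 2 ∈ Ioo 0 R := ⟨by linarith [hr₁.1], by linarith [hr₁.1, hr₁.2]⟩
    have h8 : δ (r₁/2) - η (r₁/2) ≤ 0 := by
      apply ge_of_tendsto hflim
      have hsmall : ∀ᶠ u in 𝓝[Ioo 0 R] 0, u < r₁/2 := by
        apply Filter.eventually_iff_exists_mem.mpr
        refine ⟨Iio (r₁/2) ∩ Ioo 0 R, ?_, fun u hu => hu.1⟩
        exact inter_mem (mem_nhdsWithin_of_mem_nhds (Iio_mem_nhds (by linarith [hr₁.1])))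
          self_mem_nhdsWithin
      have hmem : ∀ᶠ u in 𝓝[Ioo 0 R] 0, u ∈ Ioo 0 R := self_mem_nhdsWithin
      filter_upwards [hsmall, hmem] with u hu1 hu2
      exact (hmono u (r₁/2) hu2.1 hu1 (by linarith [hr₁.1]) hhalf.2).le
    have h9 : δ r₁ - η r₁ < δ (r₁/2) - η (r₁/2) :=
      hmono (r₁/2) r₁ hhalf.1 (by linarith [hr₁.1]) (le_refl r₁) hr₁.2
    linarith
  -- conclusion
  intro r hr
  have hneg : δ r - η r < 0 := by
    rcases lt_or_ge r ε with h | h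
    · exact hstepA r hr h
    · by_contra hcon
      push_neg at hcon
      have hmid : ε/2 ∈ Ioo 0 R := ⟨half_pos hεpos, lt_of_lt_of_le (by linarith) hεR⟩
      exact hW (ε/2) r (half_pos hεpos) (by linarith) hr.2
        (hstepA (ε/2) hmid (by linarith)) hcon
  refine ⟨by linarith, ?_⟩
  rw [(hηd r hr).deriv]
  exact div_neg_of_neg_of_pos (by linarith) hr.1
end
end

section
/- Let (p̂_rad,p̂_tan) be an elastic constitutive function for spherically symmetric bodies with â(δ,δ)>0 for all δ>0, satisfying the weak Baker–Ericksen inequality (p̂_tan(δ,η)−p̂_rad(δ,η))/(η−δ) ≥ 0 for all η>δ>0. Let G,K>0 and let δ (with associated η) be a regular solution of the static system on [0,R). Then p̂_tan(δ(r),η(r)) ≥ p̂_rad(δ(r),η(r)) for all r∈(0,R). -/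
open Real Set Filter Topology

noncomputable section

private lemma slice_snd' {F : ℝ × ℝ → ℝ} {L : ℝ × ℝ →L[ℝ] ℝ} {d e : ℝ}
    (h : HasFDerivAt F L (d, e)) :
    HasDerivAt (fun y => F (d, y)) (L (0, 1)) e := by
  have h1 : HasDerivAt (fun y : ℝ => ((d : ℝ), y)) ((0 : ℝ), (1 : ℝ)) e :=
    (hasDerivAt_const _ _).prodMk (hasDerivAt_id _)
  exact h.comp_hasDerivAt e h1

private lemma slice_fst' {F : ℝ × ℝ → ℝ} {L : ℝ × ℝ →L[ℝ] ℝ} {d e : ℝ}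
    (h : HasFDerivAt F L (d, e)) :
    HasDerivAt (fun x => F (x, e)) (L (1, 0)) d := by
  have h1 : HasDerivAt (fun x : ℝ => (x, (e : ℝ))) ((1 : ℝ), (0 : ℝ)) d :=
    (hasDerivAt_id _).prodMk (hasDerivAt_const _ _)
  exact h.comp_hasDerivAt d h1

set_option maxHeartbeats 1000000 in
/-- If `â(δ,δ) > 0` for all `δ > 0` and the weak Baker–Ericksen inequality holds, then
along any regular static solution `p̂_tan(δ(r),η(r)) ≥ p̂_rad(δ(r),η(r))` on `(0,R)`. -/
theorem regular_static_ptan_ge_prad (κ ν G K R : ℝ) (hκ : 0 < κ)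
    (hν : ν ∈ Ioc (-1 : ℝ) (1/2)) (hG : 0 < G) (hK : 0 < K) (hR : 0 < R)
    (prad ptan : ℝ → ℝ → ℝ) (helastic : IsElasticConst κ ν prad ptan)
    (ha : ∀ d : ℝ, 0 < d → 0 < ahat prad d d)
    (hBE : ∀ d e : ℝ, 0 < d → d < e → 0 ≤ (ptan d e - prad d e) / (e - d))
    (δ η : ℝ → ℝ) (hreg : IsRegularStatic prad ptan G K R δ η) :
    ∀ r ∈ Ioo 0 R, prad (δ r) (η r) ≤ ptan (δ r) (η r) := by
  obtain ⟨hprad2, hptan2, hdiag, hdiag', -, -, -, -, -, -⟩ := helastic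
  obtain ⟨hδc, hδd, -, hδpos, hη0, hηdef, hode⟩ := hreg
  have hπ : (0:ℝ) < π := Real.pi_pos
  have hδ0 : 0 < δ 0 := hδpos 0 ⟨le_refl 0, hR⟩
  have hδcont_at : ∀ r ∈ Ioo 0 R, ContinuousAt δ r := fun r hr =>
    hδc.continuousAt (Ico_mem_nhds hr.1 hr.2)
  -- derivative of η
  have hηd : ∀ r ∈ Ioo 0 R, HasDerivAt η (3 * (δ r - η r) / r) r := by
    intro r hr
    have hr0 : (0:ℝ) < r := hr.1
    have hmulc : ContinuousOn (fun s => δ s * s ^ 2) (Ico 0 R) :=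
      hδc.mul (continuous_pow 2).continuousOn
    have hint : IntervalIntegrable (fun s => δ s * s ^ 2) MeasureTheory.volume 0 r := by
      apply ContinuousOn.intervalIntegrable
      apply hmulc.mono
      rw [uIcc_of_le hr0.le]
      exact fun x hx => ⟨hx.1, lt_of_le_of_lt hx.2 hr.2⟩
    have hmeas : StronglyMeasurableAtFilter (fun s => δ s * s ^ 2) (𝓝 r) :=
      (ContinuousOn.stronglyMeasurableAtFilter isOpen_Ioo
        (hmulc.mono Ioo_subset_Ico_self)) r hr
    have hcont : ContinuousAt (fun s => δ s * s ^ 2) r :=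
      (hδcont_at r hr).mul (continuous_pow 2).continuousAt
    have hFi := intervalIntegral.integral_hasDerivAt_right hint hmeas hcont
    have hc : HasDerivAt (fun u : ℝ => 3 / u ^ 3) (-(9 / r ^ 4)) r := by
      have h1 : HasDerivAt (fun u : ℝ => u ^ 3) (3 * r ^ 2) r := by
        simpa using hasDerivAt_pow 3 r
      have h2 := (hasDerivAt_const r (3:ℝ)).div h1 (by positivity)
      refine (h2.congr_deriv ?_).congr_of_eventuallyEq (Filter.Eventually.of_forall fun u => rfl)
      field_simp
      ring
    have hprod := hc.mul hFi
    have hFr : ∫ s in (0:ℝ)..r, δ s * s ^ 2 = η r * r ^ 3 / 3 := by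
      have h := hηdef r hr
      field_simp at h
      linarith
    have hval : -(9 / r ^ 4) * (∫ s in (0:ℝ)..r, δ s * s ^ 2) + 3 / r ^ 3 * (δ r * r ^ 2)
        = 3 * (δ r - η r) / r := by
      rw [hFr]; field_simp; ring
    have hh : HasDerivAt (fun u => 3 / u ^ 3 * ∫ s in (0:ℝ)..u, δ s * s ^ 2)
        (3 * (δ r - η r) / r) r := by rw [← hval]; exact hprod
    exact hh.congr_of_eventuallyEq
      (Filter.eventuallyEq_of_mem (Ioo_mem_nhds hr.1 hr.2) hηdef)
  -- limits at 0⁺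
  have hδtend : Tendsto δ (𝓝[>] (0:ℝ)) (𝓝 (δ 0)) := by
    have h1 : Tendsto δ (𝓝[Ico 0 R] (0:ℝ)) (𝓝 (δ 0)) := hδc 0 ⟨le_refl 0, hR⟩
    exact h1.mono_left (nhdsWithin_le_iff.mpr
      (mem_of_superset (Ioo_mem_nhdsGT hR) Ioo_subset_Ico_self))
  have hηtend : Tendsto η (𝓝[>] (0:ℝ)) (𝓝 (δ 0)) := by
    rw [Metric.tendsto_nhdsWithin_nhds]
    intro ε hε
    have hcw := hδc 0 ⟨le_refl 0, hR⟩
    rw [Metric.continuousWithinAt_iff] at hcw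
    obtain ⟨ρ, hρ, hball⟩ := hcw (ε/2) (by linarith)
    refine ⟨min ρ R, by positivity, ?_⟩
    intro r hrmem hrd
    have hr0 : (0:ℝ) < r := hrmem
    rw [Real.dist_eq, sub_zero, abs_of_nonneg hr0.le] at hrd
    have hrρ : r < ρ := lt_of_lt_of_le hrd (min_le_left _ _)
    have hrR : r < R := lt_of_lt_of_le hrd (min_le_right _ _)
    have hbound : ∀ s ∈ Icc (0:ℝ) r, |δ s - δ 0| ≤ ε/2 := by
      intro s hs
      have hsmem : s ∈ Ico 0 R := ⟨hs.1, lt_of_le_of_lt hs.2 hrR⟩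
      have hsd : dist s 0 < ρ := by
        rw [Real.dist_eq, sub_zero, abs_of_nonneg hs.1]
        exact lt_of_le_of_lt hs.2 hrρ
      have h := hball hsmem hsd
      rw [Real.dist_eq] at h
      exact h.le
    have hint1 : IntervalIntegrable (fun s => δ s * s ^ 2) MeasureTheory.volume 0 r := by
      apply ContinuousOn.intervalIntegrable
      apply (hδc.mul (continuous_pow 2).continuousOn).mono
      rw [uIcc_of_le hr0.le]
      exact fun x hx => ⟨hx.1, lt_of_le_of_lt hx.2 hrR⟩
    have hint2 : IntervalIntegrable (fun s : ℝ => δ 0 * s ^ 2) MeasureTheory.volume 0 r :=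
      ((continuous_const.mul (continuous_pow 2)).intervalIntegrable 0 r)
    have heqfun : (fun s : ℝ => (δ s - δ 0) * s ^ 2)
        = fun s : ℝ => δ s * s ^ 2 - δ 0 * s ^ 2 := funext fun s => by ring
    have hintsub : IntervalIntegrable (fun s : ℝ => (δ s - δ 0) * s ^ 2)
        MeasureTheory.volume 0 r := by
      rw [heqfun]; exact hint1.sub hint2
    have hsplit : ∫ s in (0:ℝ)..r, (δ s - δ 0) * s ^ 2
        = (∫ s in (0:ℝ)..r, δ s * s ^ 2) - δ 0 * (r ^ 3 / 3) := by
      rw [heqfun, intervalIntegral.integral_sub hint1 hint2,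
        intervalIntegral.integral_const_mul, integral_pow]
      norm_num
    have habs : |∫ s in (0:ℝ)..r, (δ s - δ 0) * s ^ 2| ≤ ε/2 * (r ^ 3 / 3) := by
      have h1 := intervalIntegral.abs_integral_le_integral_abs
        (f := fun s : ℝ => (δ s - δ 0) * s ^ 2) (μ := MeasureTheory.volume) hr0.le
      have habsint : IntervalIntegrable (fun s : ℝ => |(δ s - δ 0) * s ^ 2|)
          MeasureTheory.volume 0 r := hintsub.abs
      have hconstint : IntervalIntegrable (fun s : ℝ => ε/2 * s ^ 2)
          MeasureTheory.volume 0 r := ((continuous_const.mul (continuous_pow 2)).intervalIntegrable 0 r)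
      have h2 : ∫ s in (0:ℝ)..r, |(δ s - δ 0) * s ^ 2| ≤ ∫ s in (0:ℝ)..r, ε/2 * s ^ 2 := by
        apply intervalIntegral.integral_mono_on hr0.le habsint hconstint
        intro s hs
        rw [abs_mul, abs_of_nonneg (by positivity : (0:ℝ) ≤ s ^ 2)]
        exact mul_le_mul_of_nonneg_right (hbound s hs) (by positivity)
      have h3 : ∫ s in (0:ℝ)..r, ε/2 * s ^ 2 = ε/2 * (r ^ 3 / 3) := by
        rw [intervalIntegral.integral_const_mul, integral_pow]
        norm_num
      linarith
    have hη := hηdef r ⟨hr0, hrR⟩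
    rw [Real.dist_eq]
    have hdiff : η r - δ 0 = 3 / r ^ 3 * ∫ s in (0:ℝ)..r, (δ s - δ 0) * s ^ 2 := by
      rw [hsplit, hη]; field_simp
    rw [hdiff, abs_mul, abs_of_nonneg (by positivity : (0:ℝ) ≤ 3 / r ^ 3)]
    have hfin : 3 / r ^ 3 * |∫ s in (0:ℝ)..r, (δ s - δ 0) * s ^ 2|
        ≤ 3 / r ^ 3 * (ε/2 * (r ^ 3 / 3)) :=
      mul_le_mul_of_nonneg_left habs (by positivity)
    have heq2 : 3 / r ^ 3 * (ε/2 * (r ^ 3 / 3)) = ε/2 := by field_simp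
    linarith
  -- the key comparison δ ≤ η
  have hle : ∀ r ∈ Ioo 0 R, δ r ≤ η r := by
    by_contra hcon
    push_neg at hcon
    obtain ⟨r₀, hr₀, hfr₀⟩ := hcon
    have hfc : ∀ u ∈ Ioo 0 R, ContinuousAt (fun w => δ w - η w) u := fun u hu =>
      (hδcont_at u hu).sub (hηd u hu).continuousAt
    by_cases hS : {t : ℝ | t ∈ Ioc 0 r₀ ∧ δ t - η t ≤ 0}.Nonempty
    · -- there is a "last" point where δ ≤ η before r₀; derive a contradiction there
      have hSne := hS
      set S := {t : ℝ | t ∈ Ioc 0 r₀ ∧ δ t - η t ≤ 0} with hSdef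
      have hbdd : BddAbove S := ⟨r₀, fun t ht => ht.1.2⟩
      set s := sSup S with hsdef
      obtain ⟨t0, ht0⟩ := hSne
      have hs_pos : 0 < s := lt_of_lt_of_le ht0.1.1 (le_csSup hbdd ht0)
      have hs_le : s ≤ r₀ := csSup_le ⟨t0, ht0⟩ fun t ht => ht.1.2
      have hsR : s ∈ Ioo 0 R := ⟨hs_pos, lt_of_le_of_lt hs_le hr₀.2⟩
      have hfc_s : ContinuousAt (fun w => δ w - η w) s := hfc s hsR
      have hfs_le : δ s - η s ≤ 0 := by
        by_contra hfs
        push_neg at hfs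
        have hev : {w : ℝ | 0 < δ w - η w} ∈ 𝓝 s := hfc_s (Ioi_mem_nhds hfs)
        obtain ⟨ε, hε, hball⟩ := Metric.mem_nhds_iff.mp hev
        obtain ⟨t, htS, htlt⟩ := exists_lt_of_lt_csSup ⟨t0, ht0⟩ (by linarith : s - ε < s)
        have htle : t ≤ s := le_csSup hbdd htS
        have : t ∈ Metric.ball s ε := by
          rw [Metric.mem_ball, Real.dist_eq, abs_lt]
          constructor <;> linarith
        have h2 := hball this
        have h3 : 0 < δ t - η t := h2
        exact absurd htS.2 (not_le.mpr h3)
      have hs_lt : s < r₀ := lt_of_le_of_ne hs_le fun h => by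
        rw [h] at hfs_le; linarith
      have hfpos_right : ∀ u ∈ Ioc s r₀, 0 < δ u - η u := by
        intro u hu
        by_contra h
        push_neg at h
        have huS : u ∈ S := ⟨⟨lt_trans hs_pos hu.1, hu.2⟩, h⟩
        exact absurd (le_csSup hbdd huS) (not_le.mpr hu.1)
      have hfs_ge : 0 ≤ δ s - η s := by
        have htend : Tendsto (fun w => δ w - η w) (𝓝[>] s) (𝓝 (δ s - η s)) :=
          hfc_s.tendsto.mono_left nhdsWithin_le_nhds
        refine ge_of_tendsto htend ?_
        filter_upwards [Ioo_mem_nhdsGT_of_mem (⟨le_refl s, hs_lt⟩ : s ∈ Ico s r₀)] with u hu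
        exact (hfpos_right u ⟨hu.1, hu.2.le⟩).le
      have hfs : δ s - η s = 0 := le_antisymm hfs_le hfs_ge
      have hηs : η s = δ s := by linarith
      have hx : 0 < δ s := hδpos s ⟨hs_pos.le, hsR.2⟩
      have hode_s := hode s hsR
      rw [hηs] at hode_s
      have hzero : (2 * (ptan (δ s) (δ s) - prad (δ s) (δ s))
          + 3 * (δ s - δ s) * deriv (fun e => prad (δ s) e) (δ s)) / s = 0 := by
        rw [hdiag (δ s) hx]
        simp
      rw [hzero] at hode_s
      have hgpos : 0 < 4 * π * G / 3 * K ^ 2 * s * δ s * δ s := by positivity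
      have hds_neg : deriv δ s < 0 := by
        by_contra h
        push_neg at h
        nlinarith [mul_nonneg (ha (δ s) hx).le h]
      have hfd : HasDerivAt (fun u => δ u - η u) (deriv δ s) s := by
        have h1 := (hδd s hsR).hasDerivAt
        have h2 := hηd s hsR
        have h3 := h1.sub h2
        rw [hηs] at h3
        have h4 : deriv δ s - 3 * (δ s - δ s) / s = deriv δ s := by simp
        rw [h4] at h3; exact h3
      have hslope := hasDerivAt_iff_tendsto_slope.mp hfd
      have hslope' : Tendsto (slope (fun w => δ w - η w) s) (𝓝[>] s) (𝓝 (deriv δ s)) :=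
        hslope.mono_left (nhdsWithin_mono s fun x hx => ne_of_gt hx)
      have hev : ∀ᶠ u in 𝓝[>] s, slope (fun w => δ w - η w) s u < 0 :=
        hslope'.eventually_lt_const hds_neg
      have hmem : ∀ᶠ u in 𝓝[>] s, u ∈ Ioo s r₀ :=
        eventually_of_mem (Ioo_mem_nhdsGT_of_mem (⟨le_refl s, hs_lt⟩ : s ∈ Ico s r₀))
          fun x hx => hx
      obtain ⟨u, hu1, hu2⟩ := (hev.and hmem).exists
      have hupos : 0 < slope (fun w => δ w - η w) s u := by
        rw [slope_def_field, hfs, sub_zero]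
        exact div_pos (hfpos_right u ⟨hu2.1, hu2.2.le⟩) (sub_pos.mpr hu2.1)
      linarith
    · -- δ > η on all of (0, r₀]: contradiction with the behaviour near the centre
      have hfpos : ∀ t ∈ Ioc (0:ℝ) r₀, 0 < δ t - η t := by
        intro t ht
        by_contra h
        push_neg at h
        exact hS ⟨t, ht, h⟩
      -- setup: derivatives of the pair functions
      have hUopen : IsOpen (Ioi (0:ℝ) ×ˢ Ioi (0:ℝ)) := isOpen_Ioi.prod isOpen_Ioi
      have hQp2 : ContDiffOn ℝ 2 (fun q : ℝ × ℝ => ptan q.1 q.2 - prad q.1 q.2)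
          (Ioi 0 ×ˢ Ioi 0) := hptan2.sub hprad2
      have hdiffF : ∀ p ∈ Ioi (0:ℝ) ×ˢ Ioi (0:ℝ),
          HasFDerivAt (fun q : ℝ × ℝ => prad q.1 q.2)
            (fderiv ℝ (fun q : ℝ × ℝ => prad q.1 q.2) p) p := fun p hp =>
        ((hprad2.differentiableOn (by norm_num)).differentiableAt
          (hUopen.mem_nhds hp)).hasFDerivAt
      have hdiffT : ∀ p ∈ Ioi (0:ℝ) ×ˢ Ioi (0:ℝ),
          HasFDerivAt (fun q : ℝ × ℝ => ptan q.1 q.2)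
            (fderiv ℝ (fun q : ℝ × ℝ => ptan q.1 q.2) p) p := fun p hp =>
        ((hptan2.differentiableOn (by norm_num)).differentiableAt
          (hUopen.mem_nhds hp)).hasFDerivAt
      have hdiffQ : ∀ p ∈ Ioi (0:ℝ) ×ˢ Ioi (0:ℝ),
          HasFDerivAt (fun q : ℝ × ℝ => ptan q.1 q.2 - prad q.1 q.2)
            (fderiv ℝ (fun q : ℝ × ℝ => ptan q.1 q.2 - prad q.1 q.2) p) p := fun p hp =>
        ((hQp2.differentiableOn (by norm_num)).differentiableAt
          (hUopen.mem_nhds hp)).hasFDerivAt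
      set A : ℝ × ℝ → ℝ :=
        fun p => fderiv ℝ (fun q : ℝ × ℝ => prad q.1 q.2) p (1, 0) with hAdef
      set Pf : ℝ × ℝ → ℝ :=
        fun p => fderiv ℝ (fun q : ℝ × ℝ => prad q.1 q.2) p (0, 1) with hPfdef
      set Qe : ℝ × ℝ → ℝ :=
        fun p => fderiv ℝ (fun q : ℝ × ℝ => ptan q.1 q.2 - prad q.1 q.2) p (0, 1) with hQedef
      have hsliceA : ∀ d e : ℝ, (d, e) ∈ Ioi (0:ℝ) ×ˢ Ioi (0:ℝ) →
          HasDerivAt (fun x => prad x e) (A (d, e)) d := by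
        intro d e hp
        have := slice_fst' (hdiffF (d, e) hp)
        simpa [hAdef] using this
      have hsliceP : ∀ d e : ℝ, (d, e) ∈ Ioi (0:ℝ) ×ˢ Ioi (0:ℝ) →
          HasDerivAt (fun e' => prad d e') (Pf (d, e)) e := by
        intro d e hp
        have := slice_snd' (hdiffF (d, e) hp)
        simpa [hPfdef] using this
      have hsliceQ : ∀ d e : ℝ, (d, e) ∈ Ioi (0:ℝ) ×ˢ Ioi (0:ℝ) →
          HasDerivAt (fun e' => ptan d e' - prad d e') (Qe (d, e)) e := by
        intro d e hp
        have := slice_snd' (hdiffQ (d, e) hp)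
        simpa [hQedef] using this
      have hahat : ∀ d e : ℝ, (d, e) ∈ Ioi (0:ℝ) ×ˢ Ioi (0:ℝ) →
          ahat prad d e = A (d, e) := fun d e hp => (hsliceA d e hp).deriv
      have hPder : ∀ d e : ℝ, (d, e) ∈ Ioi (0:ℝ) ×ˢ Ioi (0:ℝ) →
          deriv (fun e' => prad d e') e = Pf (d, e) := fun d e hp => (hsliceP d e hp).deriv
      -- continuity of the derivative maps
      have hAc : ContinuousOn A (Ioi 0 ×ˢ Ioi 0) := by
        rw [hAdef]
        exact (hprad2.continuousOn_fderiv_of_isOpen hUopen (by norm_num)).clm_apply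
          continuousOn_const
      have hPc : ContinuousOn Pf (Ioi 0 ×ˢ Ioi 0) := by
        rw [hPfdef]
        exact (hprad2.continuousOn_fderiv_of_isOpen hUopen (by norm_num)).clm_apply
          continuousOn_const
      have hQc : ContinuousOn Qe (Ioi 0 ×ˢ Ioi 0) := by
        rw [hQedef]
        exact (hQp2.continuousOn_fderiv_of_isOpen hUopen (by norm_num)).clm_apply
          continuousOn_const
      have hp0 : ((δ 0 : ℝ), (δ 0 : ℝ)) ∈ Ioi (0:ℝ) ×ˢ Ioi (0:ℝ) :=
        ⟨hδ0, hδ0⟩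
      -- the key diagonal identity 2·Qe + 3·Pf = 0 at (δ 0, δ 0)
      have hPd := hsliceP (δ 0) (δ 0) hp0
      have hQd := hsliceQ (δ 0) (δ 0) hp0
      have hTd : HasDerivAt (fun e' => ptan (δ 0) e')
          (Qe (δ 0, δ 0) + Pf (δ 0, δ 0)) (δ 0) := by
        have := hQd.add hPd
        exact this.congr_of_eventuallyEq (Filter.Eventually.of_forall fun e' => by simp)
      have hkey0 : 2 * Qe (δ 0, δ 0) + 3 * Pf (δ 0, δ 0) = 0 := by
        have h1 : deriv (fun e => prad (δ 0) e + 2 * ptan (δ 0) e) (δ 0)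
            = Pf (δ 0, δ 0) + 2 * (Qe (δ 0, δ 0) + Pf (δ 0, δ 0)) :=
          (hPd.add (hTd.const_mul 2)).deriv
        have h2 := hdiag' (δ 0) hδ0
        rw [h2] at h1
        linarith
      set a0 := A (δ 0, δ 0) with ha0def
      have ha0 : 0 < a0 := by
        rw [ha0def, ← hahat (δ 0) (δ 0) hp0]
        exact ha (δ 0) hδ0
      -- a good product neighbourhood of (δ 0, δ 0)
      have hAct : ContinuousAt A (δ 0, δ 0) := hAc.continuousAt (hUopen.mem_nhds hp0)
      have hPct : ContinuousAt Pf (δ 0, δ 0) := hPc.continuousAt (hUopen.mem_nhds hp0)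
      have hQct : ContinuousAt Qe (δ 0, δ 0) := hQc.continuousAt (hUopen.mem_nhds hp0)
      have hVmem : {p : ℝ × ℝ | p ∈ Ioi (0:ℝ) ×ˢ Ioi (0:ℝ) ∧ a0/2 < A p ∧
          |Qe p - Qe (δ 0, δ 0)| < a0/20 ∧ |Pf p - Pf (δ 0, δ 0)| < a0/20}
          ∈ 𝓝 ((δ 0 : ℝ), (δ 0 : ℝ)) := by
        have e0 : ∀ᶠ p in 𝓝 ((δ 0 : ℝ), (δ 0 : ℝ)), p ∈ Ioi (0:ℝ) ×ˢ Ioi (0:ℝ) :=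
          hUopen.mem_nhds hp0
        have e1 : ∀ᶠ p in 𝓝 ((δ 0 : ℝ), (δ 0 : ℝ)), a0/2 < A p :=
          hAct.eventually_const_lt (by linarith)
        have e2 : ∀ᶠ p in 𝓝 ((δ 0 : ℝ), (δ 0 : ℝ)), |Qe p - Qe (δ 0, δ 0)| < a0/20 := by
          have h : ContinuousAt
            (fun p => |Qe p - Qe (δ 0, δ 0)|) (δ 0, δ 0) := (hQct.sub continuousAt_const).abs
          have h0 : |Qe (δ 0, δ 0) - Qe (δ 0, δ 0)| = 0 := by simp
          have := h.tendsto
          rw [h0] at this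
          exact this.eventually_lt_const (by linarith)
        have e3 : ∀ᶠ p in 𝓝 ((δ 0 : ℝ), (δ 0 : ℝ)), |Pf p - Pf (δ 0, δ 0)| < a0/20 := by
          have h : ContinuousAt
            (fun p => |Pf p - Pf (δ 0, δ 0)|) (δ 0, δ 0) := (hPct.sub continuousAt_const).abs
          have h0 : |Pf (δ 0, δ 0) - Pf (δ 0, δ 0)| = 0 := by simp
          have := h.tendsto
          rw [h0] at this
          exact this.eventually_lt_const (by linarith)
        filter_upwards [e0, e1, e2, e3] with p h0 h1 h2 h3
        exact ⟨h0, h1, h2, h3⟩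
      obtain ⟨ρ, hρ, hballV⟩ := Metric.mem_nhds_iff.mp hVmem
      -- a right-neighbourhood of 0 on which δ and η stay in the ball
      have hevδ : ∀ᶠ r in 𝓝[>] (0:ℝ), δ r ∈ Metric.ball (δ 0) ρ :=
        hδtend (Metric.ball_mem_nhds _ hρ)
      have hevη : ∀ᶠ r in 𝓝[>] (0:ℝ), η r ∈ Metric.ball (δ 0) ρ :=
        hηtend (Metric.ball_mem_nhds _ hρ)
      obtain ⟨r1, hr1pos, hr1sub⟩ :=
        mem_nhdsGT_iff_exists_Ioc_subset.mp (hevδ.and hevη)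
      set ε := min r1 r₀ with hεdef
      have hr1pos' : (0:ℝ) < r1 := hr1pos
      have hεpos : 0 < ε := lt_min hr1pos' hr₀.1
      have hεr₀ : ε ≤ r₀ := min_le_right _ _
      have hεr1 : ε ≤ r1 := min_le_left _ _
      -- the function φ = (δ - η)·r² is antitone near 0, but positive with limit 0: contradiction
      have hφ : ∀ x ∈ Ioo (0:ℝ) ε,
          HasDerivAt (fun u => (δ u - η u) * u ^ 2)
            ((deriv δ x - 3 * (δ x - η x) / x) * x ^ 2 + (δ x - η x) * (2 * x)) x ∧
          (deriv δ x - 3 * (δ x - η x) / x) * x ^ 2 + (δ x - η x) * (2 * x) ≤ 0 := by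
        intro x hx
        have hx0 : (0:ℝ) < x := hx.1
        have hxr₀ : x ≤ r₀ := le_trans hx.2.le hεr₀
        have hxR : x < R := lt_of_le_of_lt hxr₀ hr₀.2
        have hxIoo : x ∈ Ioo 0 R := ⟨hx0, hxR⟩
        have hxr1 : x ∈ Ioc (0:ℝ) r1 := ⟨hx0, le_trans hx.2.le hεr1⟩
        obtain ⟨hδball, hηball⟩ := hr1sub hxr1
        have hfx : 0 < δ x - η x := hfpos x ⟨hx0, hxr₀⟩
        have hpx : ((δ x : ℝ), (η x : ℝ)) ∈ Metric.ball ((δ 0 : ℝ), (δ 0 : ℝ)) ρ := by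
          rw [← ball_prod_same]
          exact ⟨hδball, hηball⟩
        have hVx := hballV hpx
        have hδxpos : (0:ℝ) < δ x := hVx.1.1
        have hηxpos : (0:ℝ) < η x := hVx.1.2
        -- mean value theorem for e ↦ ptan (δ x) e - prad (δ x) e on [η x, δ x]
        have hIcc_ball : ∀ e ∈ Icc (η x) (δ x), e ∈ Metric.ball (δ 0) ρ := by
          intro e he
          rw [Real.ball_eq_Ioo] at hδball hηball ⊢
          exact ⟨lt_of_lt_of_le hηball.1 he.1, lt_of_le_of_lt he.2 hδball.2⟩
        have hderivw : ∀ e ∈ Icc (η x) (δ x),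
            HasDerivAt (fun e' => ptan (δ x) e' - prad (δ x) e') (Qe (δ x, e)) e := by
          intro e he
          have hpe : ((δ x : ℝ), e) ∈ Metric.ball ((δ 0 : ℝ), (δ 0 : ℝ)) ρ := by
            rw [← ball_prod_same]
            exact ⟨hδball, hIcc_ball e he⟩
          exact hsliceQ (δ x) e (hballV hpe).1
        obtain ⟨ξ, hξmem, hξ⟩ := exists_hasDerivAt_eq_slope
          (fun e' => ptan (δ x) e' - prad (δ x) e') (fun e => Qe (δ x, e))
          (by linarith : η x < δ x)
          (fun e he => (hderivw e he).continuousAt.continuousWithinAt)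
          (fun e he => hderivw e (Ioo_subset_Icc_self he))
        have hd0 : ptan (δ x) (δ x) - prad (δ x) (δ x) = 0 := by
          rw [hdiag (δ x) hδxpos]; ring
        have hwval : ptan (δ x) (η x) - prad (δ x) (η x)
            = -(Qe (δ x, ξ) * (δ x - η x)) := by
          rw [hd0] at hξ
          have hne : δ x - η x ≠ 0 := ne_of_gt hfx
          field_simp at hξ
          linarith
        -- bound the coefficient 2·Qe(δx,ξ) + 3·Pf(δx,ηx)
        have hξball : ξ ∈ Metric.ball (δ 0) ρ :=
          hIcc_ball ξ (Ioo_subset_Icc_self hξmem)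
        have hpξ : ((δ x : ℝ), ξ) ∈ Metric.ball ((δ 0 : ℝ), (δ 0 : ℝ)) ρ := by
          rw [← ball_prod_same]
          exact ⟨hδball, hξball⟩
        have hVξ := hballV hpξ
        have hQbound := hVξ.2.2.1
        have hPbound := hVx.2.2.2
        have hQl := abs_lt.mp hQbound
        have hPl := abs_lt.mp hPbound
        have hcoef : -(a0/4) ≤ 2 * Qe (δ x, ξ) + 3 * Pf (δ x, η x) := by
          nlinarith [hkey0]
        -- the ODE at x
        have hode_x := hode x hxIoo
        rw [hahat (δ x) (η x) hVx.1, hPder (δ x) (η x) hVx.1] at hode_x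
        have hgx : 0 < 4 * π * G / 3 * K ^ 2 * x * η x * δ x := by positivity
        have hAx : a0/2 < A (δ x, η x) := hVx.2.1
        -- numerator bound
        have hBle : 2 * (ptan (δ x) (η x) - prad (δ x) (η x))
            + 3 * (η x - δ x) * Pf (δ x, η x) ≤ (δ x - η x) * (a0/4) := by
          rw [hwval]
          nlinarith [hcoef, hfx]
        have hAd : A (δ x, η x) * deriv δ x * x ≤ (δ x - η x) * (a0/4) := by
          have h1 : A (δ x, η x) * deriv δ x
              ≤ (2 * (ptan (δ x) (η x) - prad (δ x) (η x))
                + 3 * (η x - δ x) * Pf (δ x, η x)) / x := by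
            rw [hode_x]; linarith
          have h2 : A (δ x, η x) * deriv δ x * x
              ≤ 2 * (ptan (δ x) (η x) - prad (δ x) (η x))
                + 3 * (η x - δ x) * Pf (δ x, η x) := by
            have := mul_le_mul_of_nonneg_right h1 hx0.le
            rwa [div_mul_cancel₀ _ (ne_of_gt hx0)] at this
          linarith
        have hdx : deriv δ x * x ≤ δ x - η x := by
          by_contra hcon2
          push_neg at hcon2
          nlinarith [hAd, hAx, ha0, hfx, mul_pos (sub_pos.mpr hcon2)
            (by linarith : (0:ℝ) < A (δ x, η x))]
        constructor
        · have h1 := (hδd x hxIoo).hasDerivAt.sub (hηd x hxIoo)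
          have h2 : HasDerivAt (fun u : ℝ => u ^ 2) (2 * x) x := by
            simpa using hasDerivAt_pow 2 x
          exact h1.mul h2
        · have heq : (deriv δ x - 3 * (δ x - η x) / x) * x ^ 2 + (δ x - η x) * (2 * x)
              = x * (deriv δ x * x - (δ x - η x)) := by
            field_simp
            ring
          rw [heq]
          exact mul_nonpos_of_nonneg_of_nonpos hx0.le (by linarith)
      have hφanti : AntitoneOn (fun u => (δ u - η u) * u ^ 2) (Ioo 0 ε) := by
        apply antitoneOn_of_deriv_nonpos (convex_Ioo 0 ε)
        · exact fun x hx => ((hφ x hx).1.continuousAt.continuousWithinAt)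
        · intro x hx
          rw [interior_Ioo] at hx
          exact ((hφ x hx).1.differentiableAt.differentiableWithinAt)
        · intro x hx
          rw [interior_Ioo] at hx
          rw [(hφ x hx).1.deriv]
          exact (hφ x hx).2
      have hφtend : Tendsto (fun u => (δ u - η u) * u ^ 2) (𝓝[>] (0:ℝ)) (𝓝 0) := by
        have h1 : Tendsto (fun u => δ u - η u) (𝓝[>] (0:ℝ)) (𝓝 0) := by
          have := hδtend.sub hηtend
          simpa using this
        have h2 : Tendsto (fun u : ℝ => u ^ 2) (𝓝[>] (0:ℝ)) (𝓝 0) := by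
          have := ((continuous_pow 2).tendsto (0:ℝ)).mono_left
            (nhdsWithin_le_nhds : 𝓝[>] (0:ℝ) ≤ 𝓝 0)
          simpa using this
        have := h1.mul h2
        simpa using this
      have htmem : ε/2 ∈ Ioo (0:ℝ) ε := ⟨by positivity, by linarith⟩
      have hφt_le : (δ (ε/2) - η (ε/2)) * (ε/2) ^ 2 ≤ 0 := by
        refine ge_of_tendsto hφtend ?_
        filter_upwards [Ioo_mem_nhdsGT_of_mem (⟨le_refl 0, htmem.1⟩ : (0:ℝ) ∈ Ico 0 (ε/2))]
          with u hu
        exact hφanti ⟨hu.1, lt_trans hu.2 htmem.2⟩ htmem hu.2.le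
      have hφt_pos : 0 < (δ (ε/2) - η (ε/2)) * (ε/2) ^ 2 := by
        have hf := hfpos (ε/2) ⟨htmem.1, by linarith⟩
        positivity
      linarith
  -- conclusion
  intro r hr
  rcases lt_or_eq_of_le (hle r hr) with hlt | heq
  · have hq := hBE (δ r) (η r) (hδpos r ⟨hr.1.le, hr.2⟩) hlt
    have hc : (0:ℝ) < η r - δ r := by linarith
    have h1 := mul_nonneg hq hc.le
    rw [div_mul_cancel₀ _ (ne_of_gt hc)] at h1
    linarith
  · rw [← heq]
    exact le_of_eq (hdiag (δ r) (hδpos r ⟨hr.1.le, hr.2⟩))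
end
end
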